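/- arXiv:1511.03324 — 3 statements merged into one kernel-verified Lean document; each statement's English description precedes it below -/
import Mathlib

section
/- For every word I with letters in {0,1,2,3} and every c ∈ {1,2,3}, there exist smooth functions ρ_J : K → ℝ, indexed by the words J with letters in {0,1,2,3} and |J| ≤ |I|, such that: (i) for every smooth function u defined on the future light cone K and every (t,x) ∈ K, ∂^I(∂̄_c u)(t,x) − ∂̄_c(∂^I u)(t,x) = t^{−1} Σ_{|J| ≤ |I|} ρ_J(t,x) ∂^J u(t,x); and (ii) for all words I₁ (letters in {0,1,2,3}) and J₁ (letters in {1,2,3}) there is a constant C, depending on I, J, I₁, J₁, with |∂^{I₁} L^{J₁} ρ_J(t,x)| ≤ C t^{−|I₁|} for all (t,x) ∈ K. -/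
noncomputable section

/-- Spatial part: Euclidean 3-space. -/
abbrev E3 : Type := EuclideanSpace ℝ (Fin 3)

/-- Spacetime points `(t, x) ∈ ℝ × ℝ³`. -/
abbrev Spt : Type := ℝ × E3

/-- Time derivative `∂_t`. -/
def dt (u : Spt → ℝ) : Spt → ℝ := fun p => fderiv ℝ u p (1, 0)

/-- Spatial derivative `∂_a`, `a = 1,2,3`. -/
def dx (a : Fin 3) (u : Spt → ℝ) : Spt → ℝ :=
  fun p => fderiv ℝ u p (0, EuclideanSpace.single a 1)

/-- `∂_α` for `α ∈ {0,1,2,3}`, with `∂_0 = ∂_t`. -/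
def pd : Fin 4 → (Spt → ℝ) → Spt → ℝ := ![dt, dx 0, dx 1, dx 2]

/-- Iterated derivatives `∂^I` for a word `I` in `{0,1,2,3}`. -/
def pdW : List (Fin 4) → (Spt → ℝ) → Spt → ℝ
  | [], u => u
  | α :: I, u => pd α (pdW I u)

/-- Lorentz boost `L_a = x^a ∂_t + t ∂_a`. -/
def lb (a : Fin 3) (u : Spt → ℝ) : Spt → ℝ :=
  fun p => p.2 a * dt u p + p.1 * dx a u p

/-- Iterated Lorentz boosts `L^J` for a word `J` in `{1,2,3}`. -/
def lbW : List (Fin 3) → (Spt → ℝ) → Spt → ℝ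
  | [], u => u
  | a :: J, u => lb a (lbW J u)

/-- Semi-hyperboloidal derivative `∂̄_a = (x^a/t) ∂_t + ∂_a`. -/
def shd (a : Fin 3) (u : Spt → ℝ) : Spt → ℝ :=
  fun p => (p.2 a / p.1) * dt u p + dx a u p

/-- The `Finset` of all words over the alphabet `k` of length at most `n`. -/
def wordsLe (k : Type) [DecidableEq k] [Fintype k] : ℕ → Finset (List k)
  | 0 => {[]}
  | n + 1 => wordsLe k n ∪ (Finset.univ ×ˢ wordsLe k n).image fun q => q.1 :: q.2

/-- The future light cone `K = {(t,x) : |x| < t − 1}`. -/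
def lightCone : Set Spt := {p : Spt | ‖p.2‖ < p.1 - 1}

namespace Aux

/-! ### Basis directions and basic facts -/

def ee : Fin 4 → Spt := ![(1,0), (0, EuclideanSpace.single 0 1), (0, EuclideanSpace.single 1 1),
  (0, EuclideanSpace.single 2 1)]

def eeT (α : Fin 4) : ℝ := (ee α).1
def eeX (α : Fin 4) (a : Fin 3) : ℝ := (ee α).2 a

lemma pd_eq (α : Fin 4) (u : Spt → ℝ) (p : Spt) : pd α u p = fderiv ℝ u p (ee α) := by
  fin_cases α <;> rfl

def posT : Set Spt := {p : Spt | 0 < p.1}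

lemma isOpen_posT : IsOpen posT := isOpen_lt continuous_const continuous_fst

lemma isOpen_lightCone : IsOpen lightCone :=
  isOpen_lt (continuous_norm.comp continuous_snd) ((continuous_fst).sub continuous_const)

lemma one_lt_of_cone {p : Spt} (hp : p ∈ lightCone) : 1 < p.1 := by
  have h0 : (0:ℝ) ≤ ‖p.2‖ := norm_nonneg _
  have : ‖p.2‖ < p.1 - 1 := hp
  linarith

lemma cone_subset_posT : lightCone ⊆ posT := by
  intro p hp
  have := one_lt_of_cone hp
  show 0 < p.1
  linarith

/-! ### pd calculus -/

lemma pd_add {f g : Spt → ℝ} {p : Spt} (hf : DifferentiableAt ℝ f p)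
    (hg : DifferentiableAt ℝ g p) (α : Fin 4) :
    pd α (fun q => f q + g q) p = pd α f p + pd α g p := by
  simp [pd_eq, fderiv_fun_add hf hg]

lemma pd_mul {f g : Spt → ℝ} {p : Spt} (hf : DifferentiableAt ℝ f p)
    (hg : DifferentiableAt ℝ g p) (α : Fin 4) :
    pd α (fun q => f q * g q) p = f p * pd α g p + g p * pd α f p := by
  simp [pd_eq, fderiv_fun_mul hf hg]

lemma pd_const (r : ℝ) (α : Fin 4) (p : Spt) : pd α (fun _ => r) p = 0 := by
  simp [pd_eq]

lemma pd_sum {ι : Type*} (s : Finset ι) {f : ι → Spt → ℝ} {p : Spt}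
    (hf : ∀ i ∈ s, DifferentiableAt ℝ (f i) p) (α : Fin 4) :
    pd α (fun q => ∑ i ∈ s, f i q) p = ∑ i ∈ s, pd α (f i) p := by
  simp only [pd_eq]
  rw [fderiv_fun_sum hf]
  simp

lemma pd_congr {s : Set Spt} (hs : IsOpen s) {f g : Spt → ℝ} (h : Set.EqOn f g s)
    {p : Spt} (hp : p ∈ s) (α : Fin 4) : pd α f p = pd α g p := by
  rw [pd_eq, pd_eq, Filter.EventuallyEq.fderiv_eq (h.eventuallyEq_of_mem (hs.mem_nhds hp))]

lemma hasFDerivAt_invT {p : Spt} (hp : p.1 ≠ 0) :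
    HasFDerivAt (fun q : Spt => q.1⁻¹)
      ((-(p.1 ^ 2)⁻¹) • ContinuousLinearMap.fst ℝ ℝ E3) p :=
  (hasDerivAt_inv hp).comp_hasFDerivAt p hasFDerivAt_fst

lemma pd_invT {p : Spt} (hp : p.1 ≠ 0) (α : Fin 4) :
    pd α (fun q : Spt => q.1⁻¹) p = -eeT α * p.1⁻¹ ^ 2 := by
  rw [pd_eq, (hasFDerivAt_invT hp).fderiv]
  simp [eeT]
  ring

lemma pd_coord (a : Fin 3) (α : Fin 4) (p : Spt) :
    pd α (fun q : Spt => q.2 a) p = eeX α a := by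
  rw [pd_eq]
  have h : (fun q : Spt => q.2 a) =
      fun q : Spt => ((EuclideanSpace.proj (𝕜 := ℝ) a).comp
        (ContinuousLinearMap.snd ℝ ℝ E3)) q := rfl
  rw [h, ContinuousLinearMap.fderiv]
  rfl

/-! ### Nice coefficient functions -/

inductive Nice : (Spt → ℝ) → Prop
  | const (c : ℝ) : Nice (fun _ => c)
  | invT : Nice (fun p => p.1⁻¹)
  | y (a : Fin 3) : Nice (fun p => p.2 a * p.1⁻¹)
  | add {f g} : Nice f → Nice g → Nice (fun p => f p + g p)
  | mul {f g} : Nice f → Nice g → Nice (fun p => f p * g p)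

lemma contDiff_coord (a : Fin 3) : ContDiff ℝ (⊤ : ℕ∞) (fun p : Spt => p.2 a) := by
  have h : (fun p : Spt => p.2 a) = fun p : Spt => (EuclideanSpace.proj a) p.2 := rfl
  rw [h]
  exact (ContinuousLinearMap.contDiff (EuclideanSpace.proj (𝕜 := ℝ) a)).comp contDiff_snd

lemma nice_smooth {f : Spt → ℝ} (hf : Nice f) : ContDiffOn ℝ (⊤ : ℕ∞) f posT := by
  induction hf with
  | const c => exact contDiffOn_const
  | invT => exact contDiff_fst.contDiffOn.inv (fun p hp => ne_of_gt hp)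
  | y a =>
      exact ((contDiff_coord a).contDiffOn).mul
        (contDiff_fst.contDiffOn.inv (fun p hp => ne_of_gt hp))
  | add hf hg ihf ihg => exact ihf.add ihg
  | mul hf hg ihf ihg => exact ihf.mul ihg

lemma diffAt_of_contDiffOn {s : Set Spt} (hs : IsOpen s) {f : Spt → ℝ}
    (hf : ContDiffOn ℝ (⊤ : ℕ∞) f s) {p : Spt} (hp : p ∈ s) : DifferentiableAt ℝ f p := by
  have := hf.contDiffAt (hs.mem_nhds hp)
  exact this.differentiableAt (by simp)

lemma nice_diffAt {f : Spt → ℝ} (hf : Nice f) {p : Spt} (hp : p ∈ posT) :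
    DifferentiableAt ℝ f p :=
  diffAt_of_contDiffOn isOpen_posT (nice_smooth hf) hp

/-- Derivatives of nice functions gain a factor `t⁻¹` and stay nice. -/
lemma nice_pd {f : Spt → ℝ} (hf : Nice f) (α : Fin 4) :
    ∃ g : Spt → ℝ, Nice g ∧ ∀ p ∈ posT, pd α f p = p.1⁻¹ * g p := by
  induction hf with
  | const c =>
      exact ⟨fun _ => 0, Nice.const 0, fun p _ => by rw [pd_const]; ring⟩
  | invT =>
      refine ⟨fun p => -eeT α * p.1⁻¹, Nice.mul (Nice.const (-eeT α)) Nice.invT, fun p hp => ?_⟩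
      rw [pd_invT (ne_of_gt hp)]
      ring
  | y a =>
      refine ⟨fun p => p.2 a * p.1⁻¹ * (-eeT α) + eeX α a,
        Nice.add (Nice.mul (Nice.y a) (Nice.const (-eeT α))) (Nice.const (eeX α a)),
        fun p hp => ?_⟩
      have h1 : DifferentiableAt ℝ (fun q : Spt => q.2 a) p :=
        ((contDiff_coord a).contDiffAt).differentiableAt (by simp)
      have h2 : DifferentiableAt ℝ (fun q : Spt => q.1⁻¹) p :=
        (hasFDerivAt_invT (ne_of_gt hp)).differentiableAt
      rw [pd_mul h1 h2 α, pd_invT (ne_of_gt hp), pd_coord]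
      ring
  | add hf hg ihf ihg =>
      obtain ⟨g1, hg1, he1⟩ := ihf
      obtain ⟨g2, hg2, he2⟩ := ihg
      refine ⟨fun p => g1 p + g2 p, Nice.add hg1 hg2, fun p hp => ?_⟩
      rw [pd_add (nice_diffAt hf hp) (nice_diffAt hg hp), he1 p hp, he2 p hp]
      ring
  | mul hf hg ihf ihg =>
      obtain ⟨g1, hg1, he1⟩ := ihf
      obtain ⟨g2, hg2, he2⟩ := ihg
      rename_i f' g'
      refine ⟨fun p => f' p * g2 p + g' p * g1 p,
        Nice.add (Nice.mul hf hg2) (Nice.mul hg hg1), fun p hp => ?_⟩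
      rw [pd_mul (nice_diffAt hf hp) (nice_diffAt hg hp), he1 p hp, he2 p hp]
      ring


lemma pd_zero_eq (u : Spt → ℝ) : pd 0 u = dt u := rfl

lemma pd_succ_eq (a : Fin 3) (u : Spt → ℝ) : pd a.succ u = dx a u := by
  fin_cases a <;> rfl

/-- Powers of `t⁻¹`: derivative formula. -/
lemma diffAt_invT_pow {p : Spt} (hp : p.1 ≠ 0) (n : ℕ) :
    DifferentiableAt ℝ (fun q : Spt => q.1⁻¹ ^ n) p :=
  ((hasFDerivAt_invT hp).differentiableAt).pow n

lemma pd_invT_pow {p : Spt} (hp : p.1 ≠ 0) (α : Fin 4) (n : ℕ) :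
    pd α (fun q : Spt => q.1⁻¹ ^ n) p = -(n : ℝ) * eeT α * p.1⁻¹ ^ (n + 1) := by
  induction n with
  | zero => simpa using pd_const 1 α p
  | succ n ih =>
      have h : (fun q : Spt => q.1⁻¹ ^ (n+1)) = fun q : Spt => q.1⁻¹ ^ n * q.1⁻¹ := by
        funext q; ring
      rw [h, pd_mul (diffAt_invT_pow hp n) (hasFDerivAt_invT hp).differentiableAt α,
        pd_invT hp, ih]
      push_cast
      ring

/-- Boosts of nice functions are nice (on `posT`). -/
lemma nice_lb {f : Spt → ℝ} (hf : Nice f) (a : Fin 3) :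
    ∃ g : Spt → ℝ, Nice g ∧ Set.EqOn (lb a f) g posT := by
  obtain ⟨g0, hg0, he0⟩ := nice_pd hf 0
  obtain ⟨ga, hga, hea⟩ := nice_pd hf a.succ
  refine ⟨fun p => p.2 a * p.1⁻¹ * g0 p + ga p,
    Nice.add (Nice.mul (Nice.y a) hg0) hga, fun p hp => ?_⟩
  have hne : p.1 ≠ 0 := ne_of_gt hp
  have h1 : dt f p = pd 0 f p := rfl
  have h2 : dx a f p = pd a.succ f p := by rw [pd_succ_eq]
  show p.2 a * dt f p + p.1 * dx a f p = _
  rw [h1, h2, he0 p hp, hea p hp]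
  field_simp

lemma lb_congr {s : Set Spt} (hs : IsOpen s) {f g : Spt → ℝ} (h : Set.EqOn f g s) (a : Fin 3) :
    Set.EqOn (lb a f) (lb a g) s := by
  intro p hp
  show p.2 a * dt f p + p.1 * dx a f p = p.2 a * dt g p + p.1 * dx a g p
  have h1 : dt f p = dt g p := by
    rw [← pd_zero_eq, ← pd_zero_eq]; exact pd_congr hs h hp 0
  have h2 : dx a f p = dx a g p := by
    rw [← pd_succ_eq, ← pd_succ_eq]; exact pd_congr hs h hp a.succ
  rw [h1, h2]

lemma nice_lbW {f : Spt → ℝ} (hf : Nice f) (J : List (Fin 3)) :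
    ∃ g : Spt → ℝ, Nice g ∧ Set.EqOn (lbW J f) g posT := by
  induction J with
  | nil => exact ⟨f, hf, fun p _ => rfl⟩
  | cons a J ih =>
      obtain ⟨g, hg, he⟩ := ih
      obtain ⟨g', hg', he'⟩ := nice_lb hg a
      exact ⟨g', hg', fun p hp => ((lb_congr isOpen_posT he a) hp).trans (he' hp)⟩

/-- Iterated derivatives of (functions agreeing with) nice functions decay like `t⁻ⁿ`. -/
lemma nice_pdW {g : Spt → ℝ} (hg : Nice g) (f : Spt → ℝ) (hfg : Set.EqOn f g posT)
    (I : List (Fin 4)) :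
    ∃ h : Spt → ℝ, Nice h ∧ ∀ p ∈ posT, pdW I f p = p.1⁻¹ ^ I.length * h p := by
  induction I with
  | nil => exact ⟨g, hg, fun p hp => by simpa [pdW] using hfg hp⟩
  | cons α I ih =>
      obtain ⟨h, hh, he⟩ := ih
      obtain ⟨h1, hh1, he1⟩ := nice_pd hh α
      set n := I.length with hn
      refine ⟨fun p => -(n : ℝ) * eeT α * h p + h1 p,
        Nice.add (Nice.mul (Nice.const _) hh) hh1, fun p hp => ?_⟩
      have hne : p.1 ≠ 0 := ne_of_gt hp
      have step1 : pd α (pdW I f) p = pd α (fun q => q.1⁻¹ ^ n * h q) p :=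
        pd_congr isOpen_posT (fun q hq => he q hq) hp α
      have step2 : pd α (fun q => q.1⁻¹ ^ n * h q) p
          = p.1⁻¹ ^ n * pd α h p + h p * pd α (fun q : Spt => q.1⁻¹ ^ n) p :=
        pd_mul (diffAt_invT_pow hne n) (nice_diffAt hh hp) α
      show pd α (pdW I f) p = _
      rw [step1, step2, pd_invT_pow hne, he1 p hp]
      simp only [List.length_cons]
      ring

/-- `|x a| ≤ ‖x‖` in Euclidean space. -/
lemma abs_coord_le_norm (x : E3) (a : Fin 3) : |x a| ≤ ‖x‖ := by
  have h := EuclideanSpace.norm_eq x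
  rw [h]
  have h1 : |x a| = Real.sqrt (|x a| ^ 2) := by
    rw [Real.sqrt_sq (abs_nonneg _)]
  rw [h1]
  apply Real.sqrt_le_sqrt
  have : ‖x a‖ ^ 2 ≤ ∑ i, ‖x i‖ ^ 2 := by
    apply Finset.single_le_sum (f := fun i => ‖x i‖ ^ 2) (fun i _ => by positivity)
      (Finset.mem_univ a)
  simpa using this

/-- Nice functions are bounded on the light cone. -/
lemma nice_bound {f : Spt → ℝ} (hf : Nice f) :
    ∃ C : ℝ, 0 ≤ C ∧ ∀ p ∈ lightCone, |f p| ≤ C := by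
  induction hf with
  | const c => exact ⟨|c|, abs_nonneg _, fun p _ => le_rfl⟩
  | invT =>
      refine ⟨1, zero_le_one, fun p hp => ?_⟩
      have h1 : 1 < p.1 := one_lt_of_cone hp
      rw [abs_of_nonneg (by positivity)]
      rw [inv_le_one_iff₀]
      right; linarith
  | y a =>
      refine ⟨1, zero_le_one, fun p hp => ?_⟩
      have h1 : 1 < p.1 := one_lt_of_cone hp
      have h2 : |p.2 a| ≤ ‖p.2‖ := abs_coord_le_norm _ _
      have h3 : ‖p.2‖ < p.1 - 1 := hp
      rw [abs_mul, abs_of_nonneg (by positivity : (0:ℝ) ≤ p.1⁻¹)]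
      rw [← le_div_iff₀ (by positivity : (0:ℝ) < p.1⁻¹)]
      rw [one_div, inv_inv]
      linarith
  | add hf hg ihf ihg =>
      obtain ⟨C1, hC1, h1⟩ := ihf
      obtain ⟨C2, hC2, h2⟩ := ihg
      exact ⟨C1 + C2, by linarith, fun p hp =>
        (abs_add_le _ _).trans (add_le_add (h1 p hp) (h2 p hp))⟩
  | mul hf hg ihf ihg =>
      obtain ⟨C1, hC1, h1⟩ := ihf
      obtain ⟨C2, hC2, h2⟩ := ihg
      refine ⟨C1 * C2, mul_nonneg hC1 hC2, fun p hp => ?_⟩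
      rw [abs_mul]
      exact mul_le_mul (h1 p hp) (h2 p hp) (abs_nonneg _) hC1

/-- The decay estimate for nice coefficients. -/
lemma nice_decay {ρ : Spt → ℝ} (hρ : Nice ρ) (I₁ : List (Fin 4)) (J₁ : List (Fin 3)) :
    ∃ C : ℝ, ∀ p ∈ lightCone, |pdW I₁ (lbW J₁ ρ) p| ≤ C * p.1 ^ (-(I₁.length : ℝ)) := by
  obtain ⟨g, hg, hfg⟩ := nice_lbW hρ J₁
  obtain ⟨h, hh, he⟩ := nice_pdW hg (lbW J₁ ρ) hfg I₁
  obtain ⟨C, hC0, hC⟩ := nice_bound hh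
  refine ⟨C, fun p hp => ?_⟩
  have hpos : 0 < p.1 := cone_subset_posT hp
  have hmem : p ∈ posT := cone_subset_posT hp
  rw [he p hmem]
  have hr : p.1 ^ (-(I₁.length : ℝ)) = p.1⁻¹ ^ I₁.length := by
    rw [Real.rpow_neg (le_of_lt hpos), Real.rpow_natCast, inv_pow]
  rw [hr, abs_mul, abs_of_nonneg (by positivity : (0:ℝ) ≤ p.1⁻¹ ^ I₁.length), mul_comm]
  exact mul_le_mul_of_nonneg_right (hC p hp) (by positivity)


/-! ### Smoothness of derivatives, Schwarz symmetry -/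

lemma pd_contDiffOn {s : Set Spt} (hs : IsOpen s) {u : Spt → ℝ}
    (hu : ContDiffOn ℝ (⊤ : ℕ∞) u s) (α : Fin 4) : ContDiffOn ℝ (⊤ : ℕ∞) (pd α u) s := by
  have h1 : ContDiffOn ℝ (⊤ : ℕ∞) (fun p => fderiv ℝ u p) s :=
    hu.fderiv_of_isOpen hs (by simp)
  have h2 : ContDiffOn ℝ (⊤ : ℕ∞) (fun p => fderiv ℝ u p (ee α)) s :=
    h1.clm_apply contDiffOn_const
  have h3 : pd α u = fun p => fderiv ℝ u p (ee α) := funext (pd_eq α u)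
  rw [h3]; exact h2

lemma pdW_contDiffOn {s : Set Spt} (hs : IsOpen s) {u : Spt → ℝ}
    (hu : ContDiffOn ℝ (⊤ : ℕ∞) u s) (I : List (Fin 4)) :
    ContDiffOn ℝ (⊤ : ℕ∞) (pdW I u) s := by
  induction I with
  | nil => exact hu
  | cons α I ih => exact pd_contDiffOn hs ih α

lemma pdW_diffAt {s : Set Spt} (hs : IsOpen s) {u : Spt → ℝ}
    (hu : ContDiffOn ℝ (⊤ : ℕ∞) u s) (I : List (Fin 4)) {p : Spt} (hp : p ∈ s) :
    DifferentiableAt ℝ (pdW I u) p :=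
  diffAt_of_contDiffOn hs (pdW_contDiffOn hs hu I) hp

lemma pd_comm {s : Set Spt} (hs : IsOpen s) {u : Spt → ℝ}
    (hu : ContDiffOn ℝ (⊤ : ℕ∞) u s) {p : Spt} (hp : p ∈ s) (α β : Fin 4) :
    pd α (pd β u) p = pd β (pd α u) p := by
  have hsym : IsSymmSndFDerivAt ℝ u p :=
    (hu.contDiffAt (hs.mem_nhds hp)).isSymmSndFDerivAt (by
      rw [show ((2:WithTop ℕ∞)) = ((2:ℕ∞) : WithTop ℕ∞) by rfl]
      rw [minSmoothness_of_isRCLikeNormedField]; exact WithTop.coe_le_coe.mpr le_top)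
  have h1 : ContDiffOn ℝ (⊤ : ℕ∞) (fun p => fderiv ℝ u p) s :=
    hu.fderiv_of_isOpen hs (by simp)
  have hdf : DifferentiableAt ℝ (fderiv ℝ u) p :=
    (h1.contDiffAt (hs.mem_nhds hp)).differentiableAt (by simp)
  have key : ∀ γ δ : Fin 4, pd γ (pd δ u) p = fderiv ℝ (fderiv ℝ u) p (ee γ) (ee δ) := by
    intro γ δ
    have hfun : pd δ u = fun q => fderiv ℝ u q (ee δ) := funext (pd_eq δ u)
    rw [pd_eq, hfun, fderiv_clm_apply hdf (differentiableAt_const (ee δ))]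
    simp
  rw [key α β, key β α, hsym (ee α) (ee β)]

/-! ### The semi-hyperboloidal derivative -/

lemma shd_eq (c : Fin 3) (u : Spt → ℝ) :
    shd c u = fun q => (q.2 c * q.1⁻¹) * pd 0 u q + pd c.succ u q := by
  funext q
  simp [shd, div_eq_mul_inv, pd_zero_eq, pd_succ_eq]

lemma shd_contDiffOn {s : Set Spt} (hs : IsOpen s) (hsub : s ⊆ posT) {u : Spt → ℝ}
    (hu : ContDiffOn ℝ (⊤ : ℕ∞) u s) (c : Fin 3) : ContDiffOn ℝ (⊤ : ℕ∞) (shd c u) s := by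
  rw [shd_eq]
  exact (((nice_smooth (Nice.y c)).mono hsub).mul (pd_contDiffOn hs hu 0)).add
    (pd_contDiffOn hs hu c.succ)

/-- The one-step commutator. -/
lemma pd_shd (c : Fin 3) {v : Spt → ℝ} (hv : ContDiffOn ℝ (⊤ : ℕ∞) v lightCone) (α : Fin 4)
    {p : Spt} (hp : p ∈ lightCone) :
    pd α (shd c v) p = shd c (pd α v) p
      + pd α (fun q : Spt => q.2 c * q.1⁻¹) p * pd 0 v p := by
  have hpT : p ∈ posT := cone_subset_posT hp
  have hwd : DifferentiableAt ℝ (fun q : Spt => q.2 c * q.1⁻¹) p := nice_diffAt (Nice.y c) hpT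
  have d0 : DifferentiableAt ℝ (pd 0 v) p :=
    diffAt_of_contDiffOn isOpen_lightCone (pd_contDiffOn isOpen_lightCone hv 0) hp
  have dc : DifferentiableAt ℝ (pd c.succ v) p :=
    diffAt_of_contDiffOn isOpen_lightCone (pd_contDiffOn isOpen_lightCone hv c.succ) hp
  rw [shd_eq c v, shd_eq c (pd α v),
    pd_add (hwd.fun_mul d0) dc α, pd_mul hwd d0 α,
    pd_comm isOpen_lightCone hv hp α 0, pd_comm isOpen_lightCone hv hp α c.succ]
  ring


/-! ### Words -/

lemma nil_mem_wordsLe (k : Type) [DecidableEq k] [Fintype k] (n : ℕ) :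
    ([] : List k) ∈ wordsLe k n := by
  induction n with
  | zero => simp [wordsLe]
  | succ n ih => exact Finset.mem_union_left _ ih

lemma wordsLe_subset_succ (k : Type) [DecidableEq k] [Fintype k] (n : ℕ) :
    wordsLe k n ⊆ wordsLe k (n + 1) := by
  intro J hJ
  exact Finset.mem_union_left _ hJ

lemma cons_mem_wordsLe {k : Type} [DecidableEq k] [Fintype k] {n : ℕ} {J : List k}
    (hJ : J ∈ wordsLe k n) (a : k) : a :: J ∈ wordsLe k (n + 1) := by
  apply Finset.mem_union_right
  exact Finset.mem_image.mpr ⟨(a, J), Finset.mem_product.mpr ⟨Finset.mem_univ _, hJ⟩, rfl⟩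

lemma self_mem_wordsLe {k : Type} [DecidableEq k] [Fintype k] (I : List k) :
    I ∈ wordsLe k I.length := by
  induction I with
  | nil => simp [wordsLe]
  | cons a I ih => exact cons_mem_wordsLe ih a

/-! ### Coefficient bookkeeping -/

open Classical in
/-- Coefficient picking out words which are `α` followed by a short word. -/
def consIf (α : Fin 4) (n : ℕ) (ρ : List (Fin 4) → Spt → ℝ) : List (Fin 4) → Spt → ℝ
  | [] => fun _ => 0
  | β :: J' => if β = α ∧ J' ∈ wordsLe (Fin 4) n then ρ J' else fun _ => 0

lemma nice_ite (c : Prop) [Decidable c] {f : Spt → ℝ} (hf : Nice f) :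
    Nice (fun q => if c then f q else 0) := by
  by_cases hc : c
  · simp only [if_pos hc]; exact hf
  · simp only [if_neg hc]; exact Nice.const 0

lemma nice_consIf {α : Fin 4} {n : ℕ} {ρ : List (Fin 4) → Spt → ℝ}
    (hρ : ∀ J, Nice (ρ J)) (J : List (Fin 4)) : Nice (fun q => consIf α n ρ J q) := by
  match J with
  | [] => exact Nice.const 0
  | β :: J' =>
      by_cases hc : β = α ∧ J' ∈ wordsLe (Fin 4) n
      · simp only [consIf, if_pos hc]; exact hρ J'
      · simp only [consIf, if_neg hc]; exact Nice.const 0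

open Classical in
lemma sum_split (α : Fin 4) (n : ℕ) (ρ : List (Fin 4) → Spt → ℝ) (q : Spt)
    (w0 : List (Fin 4)) (hw0 : w0 ∈ wordsLe (Fin 4) (n + 1))
    (A : List (Fin 4) → ℝ) (gw : ℝ) (X : List (Fin 4) → ℝ) :
    ∑ J ∈ wordsLe (Fin 4) (n + 1),
      ((if J ∈ wordsLe (Fin 4) n then A J else 0) + (if J = w0 then gw else 0)
        + consIf α n ρ J q) * X J
    = (∑ J ∈ wordsLe (Fin 4) n, A J * X J) + gw * X w0
      + ∑ J ∈ wordsLe (Fin 4) n, ρ J q * X (α :: J) := by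
  simp only [add_mul]
  rw [Finset.sum_add_distrib, Finset.sum_add_distrib]
  congr 1
  congr 1
  · -- first piece
    simp only [ite_mul, zero_mul]
    rw [Finset.sum_ite_mem]
    congr 1
    exact Finset.inter_eq_right.mpr (wordsLe_subset_succ (Fin 4) n)
  · -- second piece
    simp only [ite_mul, zero_mul]
    rw [Finset.sum_ite_eq' (wordsLe (Fin 4) (n + 1)) w0 (fun J => gw * X J)]
    rw [if_pos hw0]
  · -- third piece
    have hinj : ∀ x ∈ wordsLe (Fin 4) n, ∀ y ∈ wordsLe (Fin 4) n,
        α :: x = α :: y → x = y := by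
      intro x _ y _ h
      exact (List.cons.injEq _ _ _ _ ▸ h).2
    have himg : (wordsLe (Fin 4) n).image (fun J => α :: J) ⊆ wordsLe (Fin 4) (n + 1) := by
      intro J hJ
      obtain ⟨J', hJ', rfl⟩ := Finset.mem_image.mp hJ
      exact cons_mem_wordsLe hJ' α
    rw [← Finset.sum_subset himg]
    · rw [Finset.sum_image hinj]
      apply Finset.sum_congr rfl
      intro J hJ
      have : consIf α n ρ (α :: J) q = ρ J q := by
        simp [consIf, hJ]
      rw [this]
    · intro J hJ hJn
      match J with
      | [] => simp [consIf]
      | β :: J' =>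
          by_cases hc : β = α ∧ J' ∈ wordsLe (Fin 4) n
          · exact absurd (Finset.mem_image.mpr ⟨J', hc.2, by rw [hc.1]⟩) hJn
          · simp only [consIf, if_neg hc]
            simp


open Classical in
/-- Main commutator lemma, with nice coefficients. -/
lemma main (c : Fin 3) (I : List (Fin 4)) :
    ∃ ρf : List (Fin 4) → Spt → ℝ, (∀ J, Nice (ρf J)) ∧
      ∀ u : Spt → ℝ, ContDiffOn ℝ (⊤ : ℕ∞) u lightCone → ∀ p ∈ lightCone,
        pdW I (shd c u) p - shd c (pdW I u) p =
          p.1⁻¹ * ∑ J ∈ wordsLe (Fin 4) I.length, ρf J p * pdW J u p := by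
  induction I with
  | nil =>
      refine ⟨fun _ _ => 0, fun _ => Nice.const 0, fun u hu p hp => ?_⟩
      simp [pdW, wordsLe]
  | cons α I ih =>
      obtain ⟨ρ', hρ', hid⟩ := ih
      set n := I.length with hn
      choose g hgN hgE using fun J => nice_pd (hρ' J) α
      obtain ⟨gw, hgwN, hgwE⟩ := nice_pd (Nice.y c) α
      refine ⟨fun J q =>
        (if J ∈ wordsLe (Fin 4) n then -eeT α * (q.1⁻¹ * ρ' J q) + q.1⁻¹ * g J q else 0)
        + (if J = (0 : Fin 4) :: I then gw q else 0) + consIf α n ρ' J q, ?_, ?_⟩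
      · intro J
        refine Nice.add (Nice.add ?_ ?_) (nice_consIf hρ' J)
        · exact nice_ite _ (Nice.add (Nice.mul (Nice.const _)
            (Nice.mul Nice.invT (hρ' J))) (Nice.mul Nice.invT (hgN J)))
        · exact nice_ite _ hgwN
      · intro u hu p hp
        have hpT : p ∈ posT := cone_subset_posT hp
        have hne : p.1 ≠ 0 := ne_of_gt hpT
        set v := pdW I u with hv
        have hvS : ContDiffOn ℝ (⊤ : ℕ∞) v lightCone := pdW_contDiffOn isOpen_lightCone hu I
        set T : Spt → ℝ := fun q => ∑ J ∈ wordsLe (Fin 4) n, ρ' J q * pdW J u q with hT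
        -- differentiability facts
        have hdJ : ∀ J ∈ wordsLe (Fin 4) n,
            DifferentiableAt ℝ (fun q => ρ' J q * pdW J u q) p := fun J _ =>
          (nice_diffAt (hρ' J) hpT).mul (pdW_diffAt isOpen_lightCone hu J hp)
        have hTd : DifferentiableAt ℝ T p := DifferentiableAt.fun_sum hdJ
        have hinvd : DifferentiableAt ℝ (fun q : Spt => q.1⁻¹) p :=
          (hasFDerivAt_invT hne).differentiableAt
        have dshd : DifferentiableAt ℝ (shd c v) p :=
          diffAt_of_contDiffOn isOpen_lightCone
            (shd_contDiffOn isOpen_lightCone cone_subset_posT hvS c) hp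
        -- step 1: rewrite via the inductive hypothesis
        have hFG : Set.EqOn (pdW I (shd c u)) (fun q => shd c v q + q.1⁻¹ * T q) lightCone := by
          intro q hq
          have := hid u hu q hq
          simp only [← hv, ← hT] at this ⊢
          linarith
        have step1 : pdW (α :: I) (shd c u) p
            = pd α (fun q => shd c v q + q.1⁻¹ * T q) p :=
          pd_congr isOpen_lightCone hFG hp α
        -- step 2: split the derivative
        have step2 : pd α (fun q => shd c v q + q.1⁻¹ * T q) p
            = pd α (shd c v) p + pd α (fun q => q.1⁻¹ * T q) p :=
          pd_add dshd (hinvd.mul hTd) α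
        -- step 3: one-step commutator
        have step3 : pd α (shd c v) p
            = shd c (pdW (α :: I) u) p + (p.1⁻¹ * gw p) * pdW ((0 : Fin 4) :: I) u p := by
          rw [pd_shd c hvS α hp, hgwE p hpT]
          rfl
        -- step 4: derivative of the sum term
        have step4 : pd α (fun q => q.1⁻¹ * T q) p
            = p.1⁻¹ * pd α T p + T p * (-eeT α * p.1⁻¹ ^ 2) := by
          rw [pd_mul hinvd hTd α, pd_invT hne α]
        have step5 : pd α T p = ∑ J ∈ wordsLe (Fin 4) n,
            (ρ' J p * pdW (α :: J) u p + pdW J u p * (p.1⁻¹ * g J p)) := by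
          rw [hT, pd_sum _ hdJ α]
          apply Finset.sum_congr rfl
          intro J hJ
          rw [pd_mul (nice_diffAt (hρ' J) hpT) (pdW_diffAt isOpen_lightCone hu J hp) α,
            hgE J p hpT]
          rfl
        -- the sum over words of length ≤ n+1
        have hw0 : (0 : Fin 4) :: I ∈ wordsLe (Fin 4) (n + 1) :=
          cons_mem_wordsLe (hn ▸ self_mem_wordsLe I) (0 : Fin 4)
        have hR : ∑ J ∈ wordsLe (Fin 4) (α :: I).length,
            ((if J ∈ wordsLe (Fin 4) n then -eeT α * (p.1⁻¹ * ρ' J p) + p.1⁻¹ * g J p else 0)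
              + (if J = (0 : Fin 4) :: I then gw p else 0) + consIf α n ρ' J p) * pdW J u p
            = (∑ J ∈ wordsLe (Fin 4) n,
                (-eeT α * (p.1⁻¹ * ρ' J p) + p.1⁻¹ * g J p) * pdW J u p)
              + gw p * pdW ((0 : Fin 4) :: I) u p
              + ∑ J ∈ wordsLe (Fin 4) n, ρ' J p * pdW (α :: J) u p := by
          simp only [List.length_cons, ← hn]
          exact sum_split α n ρ' p ((0 : Fin 4) :: I) hw0 _ (gw p) (fun J => pdW J u p)
        have hsum : p.1⁻¹ * (∑ J ∈ wordsLe (Fin 4) n,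
              (ρ' J p * pdW (α :: J) u p + pdW J u p * (p.1⁻¹ * g J p)))
            + (∑ J ∈ wordsLe (Fin 4) n, ρ' J p * pdW J u p) * (-eeT α * p.1⁻¹ ^ 2)
            = p.1⁻¹ * ((∑ J ∈ wordsLe (Fin 4) n,
                (-eeT α * (p.1⁻¹ * ρ' J p) + p.1⁻¹ * g J p) * pdW J u p)
              + ∑ J ∈ wordsLe (Fin 4) n, ρ' J p * pdW (α :: J) u p) := by
          rw [Finset.mul_sum, Finset.sum_mul, mul_add, Finset.mul_sum, Finset.mul_sum,
            ← Finset.sum_add_distrib, ← Finset.sum_add_distrib]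
          apply Finset.sum_congr rfl
          intro J _
          ring
        beta_reduce
        rw [step1, step2, step3, step4, step5, hR]
        linear_combination hsum
      
end Aux

/-- Commutator of iterated partial derivatives with a semi-hyperboloidal derivative inside
the future light cone: `[∂^I, ∂̄_c] u = t⁻¹ Σ_{|J| ≤ |I|} ρ_J ∂^J u`, where the smooth
coefficients `ρ_J` satisfy `|∂^{I₁} L^{J₁} ρ_J| ≤ C t^{−|I₁|}` in `K`. -/
theorem commutator_pdW_shd (I : List (Fin 4)) (c : Fin 3) :
    ∃ ρf : List (Fin 4) → Spt → ℝ,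
      (∀ J : List (Fin 4), ContDiffOn ℝ (⊤ : ℕ∞) (ρf J) lightCone) ∧
      (∀ u : Spt → ℝ, ContDiffOn ℝ (⊤ : ℕ∞) u lightCone →
        ∀ p ∈ lightCone,
          pdW I (shd c u) p - shd c (pdW I u) p =
            p.1⁻¹ * ∑ J ∈ wordsLe (Fin 4) I.length, ρf J p * pdW J u p) ∧
      (∀ (J : List (Fin 4)) (I₁ : List (Fin 4)) (J₁ : List (Fin 3)),
        ∃ C : ℝ, ∀ p ∈ lightCone,
          |pdW I₁ (lbW J₁ (ρf J)) p| ≤ C * p.1 ^ (-(I₁.length : ℝ))) := by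
  obtain ⟨ρf, hN, hid⟩ := Aux.main c I
  exact ⟨ρf, fun J => (Aux.nice_smooth (hN J)).mono Aux.cone_subset_posT, hid,
    fun J I₁ J₁ => Aux.nice_decay (hN J) I₁ J₁⟩
end
end

section
/- There exists a constant C > 0 such that for all t > 0 and all x ∈ ℝ³, ∫_{S(x,t)} (1 + |y|)^{−1} dσ(y) ≤ C t, where S(x,t) = {y ∈ ℝ³ : |y − x| = t} and σ is the rotation-invariant surface measure on S(x,t), normalized so that σ(S(x,t)) = 4π t². -/
noncomputable section
open MeasureTheory

/-- Surface integral `∫_{S(x,R)} g dσ` over the sphere of center `x` and radius `R`,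
with respect to the rotation-invariant surface measure of total mass `4πR²`:
`∫_{S(x,R)} g dσ = R² ∫_{S(0,1)} g(x + Rω) dσ₁(ω)`, where `σ₁` is the canonical
surface measure on the unit sphere (of total mass `4π`). -/
def sphereIntegral (x : E3) (R : ℝ) (g : E3 → ℝ) : ℝ :=
  R ^ 2 * ∫ ω : Metric.sphere (0 : E3) 1, g (x + R • (ω : E3))
    ∂((volume : Measure E3).toSphere)

open Set Metric Real
open scoped ENNReal NNReal


/-- Polar coordinate change for lower Lebesgue integrals on `ℝ × ℝ`. -/
theorem lintegral_comp_polarCoord_symm' (g : ℝ × ℝ → ℝ≥0∞) :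
    ∫⁻ p, g p = ∫⁻ p in polarCoord.target, ENNReal.ofReal p.1 * g (polarCoord.symm p) := by
  set B : ℝ × ℝ → ℝ × ℝ →L[ℝ] ℝ × ℝ := fun p =>
    LinearMap.toContinuousLinearMap (Matrix.toLin (Module.Basis.finTwoProd ℝ) (Module.Basis.finTwoProd ℝ)
      !![cos p.2, -p.1 * sin p.2; sin p.2, p.1 * cos p.2])
  have A : ∀ p ∈ polarCoord.target, HasFDerivWithinAt polarCoord.symm (B p) polarCoord.target p :=
    fun p _ => (hasFDerivAt_polarCoord_symm p).hasFDerivWithinAt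
  have B_det : ∀ p, (B p).det = p.1 := by
    intro p
    conv_rhs => rw [← one_mul p.1, ← cos_sq_add_sin_sq p.2]
    simp only [B, neg_mul, LinearMap.det_toContinuousLinearMap, LinearMap.det_toLin,
      Matrix.det_fin_two_of, sub_neg_eq_add]
    ring
  calc
    ∫⁻ p, g p = ∫⁻ p in polarCoord.source, g p := by
      rw [← setLIntegral_univ]
      exact setLIntegral_congr polarCoord_source_ae_eq_univ.symm
    _ = ∫⁻ p in polarCoord.symm '' polarCoord.target, g p := by
      rw [polarCoord.symm_image_target_eq_source]
    _ = ∫⁻ p in polarCoord.target, ENNReal.ofReal |(B p).det| * g (polarCoord.symm p) := by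
      exact lintegral_image_eq_lintegral_abs_det_fderiv_mul volume
        polarCoord.open_target.measurableSet A
        (polarCoord.symm.injOn) g
    _ = ∫⁻ p in polarCoord.target, ENNReal.ofReal p.1 * g (polarCoord.symm p) := by
      refine setLIntegral_congr_fun polarCoord.open_target.measurableSet
        (fun p hp => ?_)
      rw [B_det, abs_of_pos hp.1]

/-- Spherical-coordinates disintegration of the volume on `E3`, `lintegral` version. -/
theorem lintegral_E3_polar (G : E3 → ℝ≥0∞) (hG : Measurable G) :
    ∫⁻ y, G y = ∫⁻ ω : Metric.sphere (0 : E3) 1,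
      (∫⁻ r in Set.Ioi (0 : ℝ), ENNReal.ofReal (r ^ 2) * G (r • (ω : E3)))
      ∂((volume : Measure E3).toSphere) := by
  have hdim : Module.finrank ℝ E3 = 3 := finrank_euclideanSpace_fin
  have mp := (volume : Measure E3).measurePreserving_homeomorphUnitSphereProd
  rw [hdim] at mp
  have hGm : Measurable fun p : Metric.sphere (0 : E3) 1 × Set.Ioi (0 : ℝ) =>
      G (p.2.1 • (p.1 : E3)) := by
    apply hG.comp
    exact (measurable_subtype_coe.comp measurable_snd).smul
      (measurable_subtype_coe.comp measurable_fst)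
  have key := mp.lintegral_comp hGm
  have h1 : ∫⁻ z : ({0}ᶜ : Set E3), G z.1 ∂((volume : Measure E3).comap Subtype.val)
      = ∫⁻ y, G y := by
    rw [lintegral_subtype_comap (measurableSet_singleton (0 : E3)).compl (fun y => G y),
      restrict_compl_singleton]
  have h2 : ∀ z : ({0}ᶜ : Set E3),
      G (((homeomorphUnitSphereProd E3) z).2.1 • (((homeomorphUnitSphereProd E3) z).1 : E3))
        = G z.1 := by
    intro z
    have hz : (z : E3) ≠ 0 := z.2
    simp only [homeomorphUnitSphereProd_apply_fst_coe, homeomorphUnitSphereProd_apply_snd_coe]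
    rw [smul_inv_smul₀ (norm_ne_zero_iff.2 hz)]
  rw [lintegral_congr h2, h1] at key
  rw [key, lintegral_prod _ hGm.aemeasurable]
  refine lintegral_congr fun ω => ?_
  rw [Measure.volumeIoiPow,
    lintegral_withDensity_eq_lintegral_mul _ (by fun_prop) (by fun_prop)]
  refine Eq.trans (lintegral_congr fun r => ?_)
    (lintegral_subtype_comap measurableSet_Ioi
      (fun s : ℝ => ENNReal.ofReal (s ^ 2) * G (s • (ω : E3))))
  simp [Pi.mul_apply]

theorem slice_bound (t a c : ℝ) (ht : 0 < t) (hc : 0 ≤ c) :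
    volume {u : ℝ | Real.sqrt ((u - a) ^ 2 + c) ∈ Set.Icc t (t + 1)}
      ≤ ENNReal.ofReal (2 * (2 * t + 1) / Real.sqrt ((t + 1) ^ 2 - c)) := by
  set T := t + 1 with hT
  by_cases hcT : c < T ^ 2
  · set β := Real.sqrt (T ^ 2 - c) with hβ
    set α := Real.sqrt (max (t ^ 2 - c) 0) with hα
    have hβpos : 0 < β := Real.sqrt_pos.mpr (by linarith)
    have hαβ : α ≤ β := by
      apply Real.sqrt_le_sqrt
      apply max_le (by nlinarith) (by linarith)
    have hαnn : 0 ≤ α := Real.sqrt_nonneg _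
    have hsub : {u : ℝ | Real.sqrt ((u - a) ^ 2 + c) ∈ Set.Icc t T}
        ⊆ Set.Icc (a - β) (a - α) ∪ Set.Icc (a + α) (a + β) := by
      intro u hu
      obtain ⟨h1, h2⟩ := hu
      have hX : (0:ℝ) ≤ (u - a) ^ 2 + c := by positivity
      have hle : (u - a) ^ 2 + c ≤ T ^ 2 := by
        have := Real.sq_sqrt hX
        nlinarith [Real.sqrt_nonneg ((u - a) ^ 2 + c)]
      have hge : t ^ 2 ≤ (u - a) ^ 2 + c := by
        have := Real.sq_sqrt hX
        nlinarith [Real.sqrt_nonneg ((u - a) ^ 2 + c)]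
      have hdβ : |u - a| ≤ β := by
        rw [← Real.sqrt_sq_eq_abs]
        exact Real.sqrt_le_sqrt (by linarith)
      have hdα : α ≤ |u - a| := by
        rw [← Real.sqrt_sq_eq_abs]
        exact Real.sqrt_le_sqrt (max_le (by linarith) (sq_nonneg _))
      rcases abs_cases (u - a) with ⟨he, _⟩ | ⟨he, _⟩
      · right
        constructor <;> [linarith [he ▸ hdα]; linarith [he ▸ hdβ]]
      · left
        constructor <;> [linarith [he ▸ hdβ]; linarith [he ▸ hdα]]
    calc volume {u : ℝ | Real.sqrt ((u - a) ^ 2 + c) ∈ Set.Icc t T}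
        ≤ volume (Set.Icc (a - β) (a - α) ∪ Set.Icc (a + α) (a + β)) := measure_mono hsub
      _ ≤ volume (Set.Icc (a - β) (a - α)) + volume (Set.Icc (a + α) (a + β)) :=
          measure_union_le _ _
      _ = ENNReal.ofReal (β - α) + ENNReal.ofReal (β - α) := by
          rw [Real.volume_Icc, Real.volume_Icc]
          norm_num
      _ = ENNReal.ofReal (2 * (β - α)) := by
          rw [← ENNReal.ofReal_add (by linarith) (by linarith)]
          congr 1
          ring
      _ ≤ ENNReal.ofReal (2 * (2 * t + 1) / β) := by
          apply ENNReal.ofReal_le_ofReal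
          rw [mul_div_assoc]
          have hkey : (β - α) * β ≤ 2 * t + 1 := by
            have hβ2 : β ^ 2 = T ^ 2 - c := Real.sq_sqrt (by linarith)
            have hα2 : α ^ 2 = max (t ^ 2 - c) 0 := Real.sq_sqrt (le_max_right _ _)
            have hα2' : t ^ 2 - c ≤ α ^ 2 := hα2 ▸ le_max_left _ _
            nlinarith [mul_le_mul_of_nonneg_left hαβ hαnn]
          have := (div_le_div_iff_of_pos_right hβpos).mpr hkey
          nlinarith [le_div_iff₀ hβpos |>.mpr hkey]
  · have hsub : {u : ℝ | Real.sqrt ((u - a) ^ 2 + c) ∈ Set.Icc t T} ⊆ {a} := by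
      intro u hu
      obtain ⟨h1, h2⟩ := hu
      have hX : (0:ℝ) ≤ (u - a) ^ 2 + c := by positivity
      have hle : (u - a) ^ 2 + c ≤ T ^ 2 := by
        have := Real.sq_sqrt hX
        nlinarith [Real.sqrt_nonneg ((u - a) ^ 2 + c)]
      have : (u - a) ^ 2 ≤ 0 := by nlinarith
      have : u - a = 0 := by nlinarith [sq_nonneg (u - a)]
      simp [sub_eq_zero.mp this]
    calc volume {u : ℝ | Real.sqrt ((u - a) ^ 2 + c) ∈ Set.Icc t T}
        ≤ volume ({a} : Set ℝ) := measure_mono hsub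
      _ = 0 := measure_singleton a
      _ ≤ _ := zero_le

theorem oneD (t : ℝ) (ht : 0 < t) :
    ∫⁻ r in Set.Ioi (0 : ℝ), ENNReal.ofReal r * ENNReal.ofReal ((1 + r)⁻¹)
        * ENNReal.ofReal (2 * (2 * t + 1) / Real.sqrt ((t + 1) ^ 2 - r ^ 2))
      ≤ ENNReal.ofReal (2 * (2 * t + 1)) * ENNReal.ofReal 2 := by
  set T := t + 1 with hT
  have hTpos : (0:ℝ) < T := by linarith
  -- pointwise bound by an indicator function
  have hpt : ∀ r ∈ Set.Ioi (0:ℝ),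
      ENNReal.ofReal r * ENNReal.ofReal ((1 + r)⁻¹)
          * ENNReal.ofReal (2 * (2 * t + 1) / Real.sqrt (T ^ 2 - r ^ 2))
        ≤ (Set.Ioo (0:ℝ) T).indicator
            (fun r => ENNReal.ofReal (2 * (2 * t + 1))
              * ENNReal.ofReal ((Real.sqrt (T * (T - r)))⁻¹)) r := by
    intro r hr
    rw [Set.mem_Ioi] at hr
    by_cases hrT : r < T
    · rw [Set.indicator_of_mem (Set.mem_Ioo.mpr ⟨hr, hrT⟩)]
      have h1 : ENNReal.ofReal r * ENNReal.ofReal ((1 + r)⁻¹) ≤ 1 := by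
        rw [← ENNReal.ofReal_mul hr.le, ← ENNReal.ofReal_one]
        apply ENNReal.ofReal_le_ofReal
        rw [← div_eq_mul_inv, div_le_one (by linarith)]
        linarith
      have h2 : ENNReal.ofReal (2 * (2 * t + 1) / Real.sqrt (T ^ 2 - r ^ 2))
          ≤ ENNReal.ofReal (2 * (2 * t + 1)) * ENNReal.ofReal ((Real.sqrt (T * (T - r)))⁻¹) := by
        rw [← ENNReal.ofReal_mul (by positivity), ← div_eq_mul_inv]
        apply ENNReal.ofReal_le_ofReal
        have hden : Real.sqrt (T * (T - r)) ≤ Real.sqrt (T ^ 2 - r ^ 2) :=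
          Real.sqrt_le_sqrt (by nlinarith)
        have hdenpos : 0 < Real.sqrt (T * (T - r)) :=
          Real.sqrt_pos.mpr (by nlinarith)
        apply div_le_div_of_nonneg_left (by positivity) hdenpos hden
      calc ENNReal.ofReal r * ENNReal.ofReal ((1 + r)⁻¹)
            * ENNReal.ofReal (2 * (2 * t + 1) / Real.sqrt (T ^ 2 - r ^ 2))
          ≤ 1 * (ENNReal.ofReal (2 * (2 * t + 1)) * ENNReal.ofReal ((Real.sqrt (T * (T - r)))⁻¹)) := by
            exact mul_le_mul' h1 h2
        _ = _ := one_mul _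
    · have hzero : Real.sqrt (T ^ 2 - r ^ 2) = 0 := by
        rw [Real.sqrt_eq_zero']
        nlinarith [not_lt.mp hrT]
      rw [hzero, div_zero, ENNReal.ofReal_zero, mul_zero]
      exact zero_le
  calc ∫⁻ r in Set.Ioi (0 : ℝ), ENNReal.ofReal r * ENNReal.ofReal ((1 + r)⁻¹)
        * ENNReal.ofReal (2 * (2 * t + 1) / Real.sqrt (T ^ 2 - r ^ 2))
      ≤ ∫⁻ r in Set.Ioi (0 : ℝ), (Set.Ioo (0:ℝ) T).indicator
          (fun r => ENNReal.ofReal (2 * (2 * t + 1))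
            * ENNReal.ofReal ((Real.sqrt (T * (T - r)))⁻¹)) r := setLIntegral_mono' measurableSet_Ioi hpt
    _ = ∫⁻ r in Set.Ioo (0:ℝ) T, ENNReal.ofReal (2 * (2 * t + 1))
          * ENNReal.ofReal ((Real.sqrt (T * (T - r)))⁻¹) := by
        rw [lintegral_indicator measurableSet_Ioo, Measure.restrict_restrict measurableSet_Ioo,
          Set.inter_eq_left.mpr (fun r hr => hr.1)]
    _ = ENNReal.ofReal (2 * (2 * t + 1)) * ∫⁻ r in Set.Ioo (0:ℝ) T,
          ENNReal.ofReal ((Real.sqrt (T * (T - r)))⁻¹) :=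
        lintegral_const_mul' _ _ ENNReal.ofReal_ne_top
    _ ≤ ENNReal.ofReal (2 * (2 * t + 1)) * ENNReal.ofReal 2 := by
        gcongr
        -- the 1D integral computation
        have hii : IntervalIntegrable (fun u : ℝ => u ^ (-(1/2) : ℝ)) volume 0 T :=
          intervalIntegral.intervalIntegrable_rpow' (by norm_num)
        have hii2 : IntervalIntegrable (fun u : ℝ => (T - u) ^ (-(1/2) : ℝ)) volume 0 T := by
          have := (hii.comp_sub_left T).symm
          simpa using this
        have heq : ∀ r ∈ Set.Ioo (0:ℝ) T,
            (Real.sqrt (T * (T - r)))⁻¹ = (Real.sqrt T)⁻¹ * (T - r) ^ (-(1/2) : ℝ) := by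
          intro r hr
          rw [Real.sqrt_mul hTpos.le, mul_inv]
          congr 1
          rw [Real.rpow_neg (by linarith [hr.2]), Real.sqrt_eq_rpow]
        have hint : IntegrableOn (fun r : ℝ => (Real.sqrt (T * (T - r)))⁻¹) (Set.Ioo 0 T) := by
          apply IntegrableOn.congr_fun _ (fun r hr => (heq r hr).symm) measurableSet_Ioo
          apply Integrable.const_mul
          have := (intervalIntegrable_iff_integrableOn_Ioc_of_le hTpos.le).mp hii2
          exact this.mono_set Set.Ioo_subset_Ioc_self
        rw [← ofReal_integral_eq_lintegral_ofReal hint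
          (Filter.Eventually.of_forall fun r => by positivity)]
        apply ENNReal.ofReal_le_ofReal
        have hval : ∫ r in Set.Ioo (0:ℝ) T, (Real.sqrt (T * (T - r)))⁻¹
            = (Real.sqrt T)⁻¹ * ∫ r in (0:ℝ)..T, (T - r) ^ (-(1/2) : ℝ) := by
          rw [setIntegral_congr_fun measurableSet_Ioo heq, ← integral_Ioc_eq_integral_Ioo,
            ← intervalIntegral.integral_of_le hTpos.le, intervalIntegral.integral_const_mul]
        have hcomp : ∫ r in (0:ℝ)..T, (T - r) ^ (-(1/2):ℝ)
            = ∫ u in (0:ℝ)..T, u ^ (-(1/2):ℝ) := by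
          have := intervalIntegral.integral_comp_sub_left (a := 0) (b := T) (fun u : ℝ => u ^ (-(1/2):ℝ)) T
          simpa using this
        have hrpow : ∫ u in (0:ℝ)..T, u ^ (-(1/2):ℝ) = 2 * Real.sqrt T := by
          rw [integral_rpow (Or.inl (by norm_num))]
          rw [Real.zero_rpow (by norm_num), Real.sqrt_eq_rpow]
          norm_num
          ring
        rw [hval, hcomp, hrpow]
        have hsT : Real.sqrt T ≠ 0 := ne_of_gt (Real.sqrt_pos.mpr hTpos)
        field_simp
        exact le_rfl

theorem step1 (t : ℝ) (ht : 0 < t) (x : E3) :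
    ENNReal.ofReal (t ^ 2) * (∫⁻ ω : Metric.sphere (0 : E3) 1,
        ENNReal.ofReal ((1 + ‖x + t • (ω : E3)‖)⁻¹) ∂((volume : Measure E3).toSphere))
      ≤ 2 * ∫⁻ z, ({z : E3 | ‖z - x‖ ∈ Set.Icc t (t + 1)}).indicator
          (fun z => ENNReal.ofReal ((1 + ‖z‖)⁻¹)) z := by
  set W : E3 → ℝ≥0∞ := ({z : E3 | ‖z - x‖ ∈ Set.Icc t (t + 1)}).indicator
    (fun z => ENNReal.ofReal ((1 + ‖z‖)⁻¹)) with hW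
  have hAmeas : MeasurableSet {z : E3 | ‖z - x‖ ∈ Set.Icc t (t + 1)} :=
    ((continuous_id.sub continuous_const).norm.measurable) measurableSet_Icc
  have hWm : Measurable W := by
    apply Measurable.indicator _ hAmeas
    exact ((measurable_const.add measurable_norm).inv).ennreal_ofReal
  have key := lintegral_E3_polar (fun y => W (x + y))
    (hWm.comp (measurable_const.add measurable_id))
  have htrans : ∫⁻ y, W (x + y) = ∫⁻ z, W z := lintegral_add_left_eq_self W x
  rw [htrans] at key
  rw [key]
  -- pointwise (in ω) bound for the inner integral
  have inner : ∀ ω : Metric.sphere (0 : E3) 1,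
      ENNReal.ofReal (t ^ 2) * ENNReal.ofReal ((1 + ‖x + t • (ω : E3)‖)⁻¹)
        ≤ 2 * ∫⁻ r in Set.Ioi (0 : ℝ), ENNReal.ofReal (r ^ 2) * W (x + r • (ω : E3)) := by
    intro ω
    have hω : ‖(ω : E3)‖ = 1 := mem_sphere_zero_iff_norm.mp ω.2
    have hf_pos : (0 : ℝ) < 1 + ‖x + t • (ω : E3)‖ := by positivity
    set c : ℝ≥0∞ := ENNReal.ofReal (t ^ 2) * ENNReal.ofReal ((1 + ‖x + t • (ω : E3)‖)⁻¹)
      with hc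
    have hsub : Set.Icc t (t + 1) ⊆ Set.Ioi (0 : ℝ) := fun r hr => lt_of_lt_of_le ht hr.1
    have hlow : ∀ r ∈ Set.Icc t (t + 1),
        c / 2 ≤ ENNReal.ofReal (r ^ 2) * W (x + r • (ω : E3)) := by
      intro r hr
      have hrpos : 0 < r := lt_of_lt_of_le ht hr.1
      have hmem : x + r • (ω : E3) ∈ {z : E3 | ‖z - x‖ ∈ Set.Icc t (t + 1)} := by
        simp only [Set.mem_setOf_eq, add_sub_cancel_left, norm_smul, hω, mul_one,
          Real.norm_eq_abs, abs_of_pos hrpos]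
        exact hr
      rw [hW, Set.indicator_of_mem hmem]
      have hnorm : ‖x + r • (ω : E3)‖ ≤ ‖x + t • (ω : E3)‖ + 1 := by
        have : x + r • (ω : E3) = (x + t • (ω : E3)) + (r - t) • (ω : E3) := by
          rw [sub_smul]; abel
        rw [this]
        refine (norm_add_le _ _).trans ?_
        gcongr
        rw [norm_smul, hω, mul_one, Real.norm_eq_abs, abs_of_nonneg (by linarith [hr.1])]
        linarith [hr.2]
      have hb : (0 : ℝ) < 1 + ‖x + r • (ω : E3)‖ := by positivity
      have hhalf : (1 + ‖x + t • (ω : E3)‖)⁻¹ / 2 ≤ (1 + ‖x + r • (ω : E3)‖)⁻¹ := by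
        have h2a : 1 + ‖x + r • (ω : E3)‖ ≤ 2 * (1 + ‖x + t • (ω : E3)‖) := by linarith [norm_nonneg (x + t • (ω : E3))]
        calc (1 + ‖x + t • (ω : E3)‖)⁻¹ / 2
            = (2 * (1 + ‖x + t • (ω : E3)‖))⁻¹ := by rw [mul_inv]; ring
          _ ≤ (1 + ‖x + r • (ω : E3)‖)⁻¹ := by gcongr
      calc c / 2
          = ENNReal.ofReal (t ^ 2) * (ENNReal.ofReal ((1 + ‖x + t • (ω : E3)‖)⁻¹) / 2) := by
            rw [hc, mul_div_assoc]
        _ = ENNReal.ofReal (t ^ 2) * ENNReal.ofReal ((1 + ‖x + t • (ω : E3)‖)⁻¹ / 2) := by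
            rw [ENNReal.ofReal_div_of_pos (by norm_num : (0:ℝ) < 2)]
            norm_num
        _ ≤ ENNReal.ofReal (r ^ 2) * ENNReal.ofReal ((1 + ‖x + r • (ω : E3)‖)⁻¹) := by
            gcongr
            · exact hr.1
    -- now conclude `c ≤ 2 * ∫⁻ ...`
    have hmono1 : ∫⁻ r in Set.Icc t (t + 1), (c / 2) ∂volume
        ≤ ∫⁻ r in Set.Icc t (t + 1), ENNReal.ofReal (r ^ 2) * W (x + r • (ω : E3)) ∂volume := by
      refine setLIntegral_mono ?_ hlow
      exact (measurable_id.pow_const 2).ennreal_ofReal.mul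
        (hWm.comp (measurable_const.add (measurable_id.smul measurable_const)))
    have hconst : ∫⁻ _ in Set.Icc t (t + 1), (c / 2) ∂volume = c / 2 := by
      rw [setLIntegral_const, Real.volume_Icc]
      norm_num
    have hmono2 : ∫⁻ r in Set.Icc t (t + 1), ENNReal.ofReal (r ^ 2) * W (x + r • (ω : E3)) ∂volume
        ≤ ∫⁻ r in Set.Ioi (0 : ℝ), ENNReal.ofReal (r ^ 2) * W (x + r • (ω : E3)) ∂volume :=
      lintegral_mono_set hsub
    have : c / 2 ≤ ∫⁻ r in Set.Ioi (0 : ℝ), ENNReal.ofReal (r ^ 2) * W (x + r • (ω : E3)) := by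
      rw [← hconst]; exact hmono1.trans hmono2
    calc c = 2 * (c / 2) := by
            rw [mul_comm, ENNReal.div_mul_cancel (by norm_num) ENNReal.ofNat_ne_top]
      _ ≤ 2 * ∫⁻ r in Set.Ioi (0 : ℝ), ENNReal.ofReal (r ^ 2) * W (x + r • (ω : E3)) := by
            gcongr
  calc ENNReal.ofReal (t ^ 2) * (∫⁻ ω : Metric.sphere (0 : E3) 1,
        ENNReal.ofReal ((1 + ‖x + t • (ω : E3)‖)⁻¹) ∂((volume : Measure E3).toSphere))
      = ∫⁻ ω : Metric.sphere (0 : E3) 1, ENNReal.ofReal (t ^ 2) *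
          ENNReal.ofReal ((1 + ‖x + t • (ω : E3)‖)⁻¹) ∂((volume : Measure E3).toSphere) :=
        (lintegral_const_mul' _ _ ENNReal.ofReal_ne_top).symm
    _ ≤ ∫⁻ ω : Metric.sphere (0 : E3) 1, (2 * ∫⁻ r in Set.Ioi (0 : ℝ),
          ENNReal.ofReal (r ^ 2) * W (x + r • (ω : E3)) ∂volume)
          ∂((volume : Measure E3).toSphere) :=
        lintegral_mono inner
    _ = 2 * ∫⁻ ω : Metric.sphere (0 : E3) 1, (∫⁻ r in Set.Ioi (0 : ℝ),
          ENNReal.ofReal (r ^ 2) * W (x + r • (ω : E3)) ∂volume)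
          ∂((volume : Measure E3).toSphere) :=
        lintegral_const_mul' 2 _ ENNReal.ofNat_ne_top

theorem step2 (t T : ℝ) (x : E3) :
    ∫⁻ z, ({z : E3 | ‖z - x‖ ∈ Set.Icc t T}).indicator
        (fun z => ENNReal.ofReal ((1 + ‖z‖)⁻¹)) z
    = ∫⁻ z, ({z : E3 | ‖z - ‖x‖ • (EuclideanSpace.single (0 : Fin 3) (1:ℝ))‖ ∈ Set.Icc t T}).indicator
        (fun z => ENNReal.ofReal ((1 + ‖z‖)⁻¹)) z := by
  set y : E3 := ‖x‖ • EuclideanSpace.single (0 : Fin 3) (1:ℝ) with hy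
  have hxy : ‖x‖ = ‖y‖ := by
    rw [hy, norm_smul, EuclideanSpace.norm_single, norm_one, mul_one, Real.norm_eq_abs,
      abs_of_nonneg (norm_nonneg x)]
  set R := Submodule.reflection (ℝ ∙ (x - y))ᗮ with hR
  have hRx : R x = y := Submodule.reflection_sub hxy
  have hxRy : x = R y := by
    have := congrArg R hRx
    rwa [hR, Submodule.reflection_reflection] at this
  have mp : MeasurePreserving R (volume : Measure E3) volume :=
    LinearIsometryEquiv.measurePreserving R
  have hWm : Measurable fun z : E3 => ({z : E3 | ‖z - x‖ ∈ Set.Icc t T}).indicator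
      (fun z => ENNReal.ofReal ((1 + ‖z‖)⁻¹)) z := by
    apply Measurable.indicator
    · exact ((measurable_const.add measurable_norm).inv).ennreal_ofReal
    · exact ((continuous_id.sub continuous_const).norm.measurable) measurableSet_Icc
  have key := mp.lintegral_comp hWm
  have hpt : ∀ z : E3, ({z : E3 | ‖z - x‖ ∈ Set.Icc t T}).indicator
      (fun z => ENNReal.ofReal ((1 + ‖z‖)⁻¹)) (R z)
      = ({z : E3 | ‖z - y‖ ∈ Set.Icc t T}).indicator
      (fun z => ENNReal.ofReal ((1 + ‖z‖)⁻¹)) z := by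
    intro z
    have h1 : ‖R z - x‖ = ‖z - y‖ := by
      rw [hxRy, ← map_sub, R.norm_map]
    simp only [Set.indicator_apply, Set.mem_setOf_eq, h1, R.norm_map]
  rw [← key]
  exact lintegral_congr hpt

theorem step3 (t T a : ℝ) :
    ∫⁻ z, ({z : E3 | ‖z - a • (EuclideanSpace.single (0 : Fin 3) (1:ℝ))‖ ∈ Set.Icc t T}).indicator
        (fun z => ENNReal.ofReal ((1 + ‖z‖)⁻¹)) z
    = ∫⁻ p : ℝ × ℝ × ℝ, ({p : ℝ × ℝ × ℝ |
          Real.sqrt ((p.1 - a) ^ 2 + p.2.1 ^ 2 + p.2.2 ^ 2) ∈ Set.Icc t T}).indicator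
        (fun p => ENNReal.ofReal ((1 + Real.sqrt (p.1 ^ 2 + p.2.1 ^ 2 + p.2.2 ^ 2))⁻¹)) p := by
  set Ψ : ℝ × ℝ × ℝ → ℝ≥0∞ := ({p : ℝ × ℝ × ℝ |
      Real.sqrt ((p.1 - a) ^ 2 + p.2.1 ^ 2 + p.2.2 ^ 2) ∈ Set.Icc t T}).indicator
    (fun p => ENNReal.ofReal ((1 + Real.sqrt (p.1 ^ 2 + p.2.1 ^ 2 + p.2.2 ^ 2))⁻¹)) with hΨ
  have hcont1 : Continuous fun p : ℝ × ℝ × ℝ =>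
      Real.sqrt ((p.1 - a) ^ 2 + p.2.1 ^ 2 + p.2.2 ^ 2) := by fun_prop
  have hcont2 : Continuous fun p : ℝ × ℝ × ℝ =>
      Real.sqrt (p.1 ^ 2 + p.2.1 ^ 2 + p.2.2 ^ 2) := by fun_prop
  have hΨm : Measurable Ψ := by
    apply Measurable.indicator
    · exact ((measurable_const.add hcont2.measurable).inv).ennreal_ofReal
    · exact hcont1.measurable measurableSet_Icc
  have mp1 := EuclideanSpace.volume_preserving_symm_measurableEquiv_toLp (Fin 3)
  have mp2 := volume_preserving_piFinSuccAbove (fun _ : Fin 3 => ℝ) 0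
  have mp3 := (MeasurePreserving.id (volume : Measure ℝ)).prod
    (volume_preserving_finTwoArrow ℝ)
  have mp3' : MeasurePreserving (Prod.map (id : ℝ → ℝ) (MeasurableEquiv.finTwoArrow : (Fin 2 → ℝ) ≃ᵐ ℝ × ℝ))
      (volume : Measure (ℝ × (Fin 2 → ℝ))) (volume : Measure (ℝ × ℝ × ℝ)) := by
    rw [Measure.volume_eq_prod, Measure.volume_eq_prod]
    exact mp3
  have mp : MeasurePreserving
      (fun z : E3 => ((Prod.map (id : ℝ → ℝ) (MeasurableEquiv.finTwoArrow : (Fin 2 → ℝ) ≃ᵐ ℝ × ℝ))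
        ((MeasurableEquiv.piFinSuccAbove (fun _ : Fin 3 => ℝ) 0)
          ((MeasurableEquiv.toLp 2 (Fin 3 → ℝ)).symm z))))
      (volume : Measure E3) (volume : Measure (ℝ × ℝ × ℝ)) :=
    (mp3'.comp mp2).comp mp1
  have key := mp.lintegral_comp hΨm
  rw [← key]
  refine lintegral_congr fun z => ?_
  have hcoord : (Prod.map (id : ℝ → ℝ) (MeasurableEquiv.finTwoArrow : (Fin 2 → ℝ) ≃ᵐ ℝ × ℝ))
      ((MeasurableEquiv.piFinSuccAbove (fun _ : Fin 3 => ℝ) 0)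
        ((MeasurableEquiv.toLp 2 (Fin 3 → ℝ)).symm z)) = (z 0, z 1, z 2) := by
    rfl
  rw [hcoord]
  have hn1 : Real.sqrt ((z 0 - a) ^ 2 + (z 1) ^ 2 + (z 2) ^ 2)
      = ‖z - a • (EuclideanSpace.single (0 : Fin 3) (1:ℝ))‖ := by
    rw [EuclideanSpace.norm_eq, Fin.sum_univ_three]
    congr 1
    simp only [PiLp.sub_apply, PiLp.smul_apply, EuclideanSpace.single_apply, smul_eq_mul,
      Real.norm_eq_abs, sq_abs]
    norm_num [Fin.ext_iff]
  have hn2 : Real.sqrt ((z 0) ^ 2 + (z 1) ^ 2 + (z 2) ^ 2) = ‖z‖ := by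
    rw [EuclideanSpace.norm_eq, Fin.sum_univ_three]
    simp only [Real.norm_eq_abs, sq_abs]
  rw [hΨ]
  simp only [Set.indicator_apply, Set.mem_setOf_eq, hn1, hn2]

theorem step4 (a t : ℝ) (ht : 0 < t) :
    ∫⁻ p : ℝ × ℝ × ℝ, ({p : ℝ × ℝ × ℝ |
          Real.sqrt ((p.1 - a) ^ 2 + p.2.1 ^ 2 + p.2.2 ^ 2) ∈ Set.Icc t (t + 1)}).indicator
        (fun p => ENNReal.ofReal ((1 + Real.sqrt (p.1 ^ 2 + p.2.1 ^ 2 + p.2.2 ^ 2))⁻¹)) p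
      ≤ ENNReal.ofReal (8 * π * (2 * t + 1)) := by
  set T := t + 1 with hT
  set Ψ : ℝ × ℝ × ℝ → ℝ≥0∞ := ({p : ℝ × ℝ × ℝ |
      Real.sqrt ((p.1 - a) ^ 2 + p.2.1 ^ 2 + p.2.2 ^ 2) ∈ Set.Icc t T}).indicator
    (fun p => ENNReal.ofReal ((1 + Real.sqrt (p.1 ^ 2 + p.2.1 ^ 2 + p.2.2 ^ 2))⁻¹)) with hΨ
  have hcont1 : Continuous fun p : ℝ × ℝ × ℝ =>
      Real.sqrt ((p.1 - a) ^ 2 + p.2.1 ^ 2 + p.2.2 ^ 2) := by fun_prop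
  have hcont2 : Continuous fun p : ℝ × ℝ × ℝ =>
      Real.sqrt (p.1 ^ 2 + p.2.1 ^ 2 + p.2.2 ^ 2) := by fun_prop
  have hΨm : Measurable Ψ := by
    apply Measurable.indicator
    · exact ((measurable_const.add hcont2.measurable).inv).ennreal_ofReal
    · exact hcont1.measurable measurableSet_Icc
  set g : ℝ × ℝ → ℝ≥0∞ := fun q => ENNReal.ofReal ((1 + Real.sqrt (q.1 ^ 2 + q.2 ^ 2))⁻¹)
    * ENNReal.ofReal (2 * (2 * t + 1) / Real.sqrt (T ^ 2 - (q.1 ^ 2 + q.2 ^ 2))) with hg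
  have hsplit : ∫⁻ p : ℝ × ℝ × ℝ, Ψ p = ∫⁻ q : ℝ × ℝ, (∫⁻ u : ℝ, Ψ (u, q)) ∂volume := by
    rw [Measure.volume_eq_prod, lintegral_prod_symm _ hΨm.aemeasurable]
  have hinner : ∀ q : ℝ × ℝ, (∫⁻ u : ℝ, Ψ (u, q)) ≤ g q := by
    intro q
    set c : ℝ := q.1 ^ 2 + q.2 ^ 2 with hc
    have hcnn : (0:ℝ) ≤ c := by positivity
    have hptw : ∀ u : ℝ, Ψ (u, q) ≤ ({u : ℝ | Real.sqrt ((u - a) ^ 2 + c) ∈ Set.Icc t T}).indicator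
        (fun _ => ENNReal.ofReal ((1 + Real.sqrt c)⁻¹)) u := by
      intro u
      rw [hΨ]
      by_cases hmem : (u, q) ∈ {p : ℝ × ℝ × ℝ |
          Real.sqrt ((p.1 - a) ^ 2 + p.2.1 ^ 2 + p.2.2 ^ 2) ∈ Set.Icc t T}
      · rw [Set.indicator_of_mem hmem]
        have hmem' : u ∈ {u : ℝ | Real.sqrt ((u - a) ^ 2 + c) ∈ Set.Icc t T} := by
          simpa [hc, add_assoc] using hmem
        rw [Set.indicator_of_mem hmem']
        apply ENNReal.ofReal_le_ofReal
        have h1 : Real.sqrt c ≤ Real.sqrt (u ^ 2 + q.1 ^ 2 + q.2 ^ 2) :=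
          Real.sqrt_le_sqrt (by nlinarith [sq_nonneg u])
        have h2 : (0:ℝ) < 1 + Real.sqrt c := by positivity
        gcongr
      · rw [Set.indicator_of_notMem hmem]
        exact zero_le
    calc (∫⁻ u : ℝ, Ψ (u, q))
        ≤ ∫⁻ u : ℝ, ({u : ℝ | Real.sqrt ((u - a) ^ 2 + c) ∈ Set.Icc t T}).indicator
            (fun _ => ENNReal.ofReal ((1 + Real.sqrt c)⁻¹)) u := lintegral_mono hptw
      _ = ENNReal.ofReal ((1 + Real.sqrt c)⁻¹)
            * volume {u : ℝ | Real.sqrt ((u - a) ^ 2 + c) ∈ Set.Icc t T} := by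
          have hsm : MeasurableSet {u : ℝ | Real.sqrt ((u - a) ^ 2 + c) ∈ Set.Icc t T} :=
            (by fun_prop : Continuous fun u : ℝ =>
              Real.sqrt ((u - a) ^ 2 + c)).measurable measurableSet_Icc
          rw [lintegral_indicator hsm, setLIntegral_const]
      _ ≤ ENNReal.ofReal ((1 + Real.sqrt c)⁻¹)
            * ENNReal.ofReal (2 * (2 * t + 1) / Real.sqrt (T ^ 2 - c)) := by
          gcongr
          exact slice_bound t a c ht hcnn
      _ = g q := rfl
  have houter : ∫⁻ q : ℝ × ℝ, g q
      ≤ ENNReal.ofReal (2 * (2 * t + 1)) * ENNReal.ofReal 2 * ENNReal.ofReal (2 * π) := by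
    rw [lintegral_comp_polarCoord_symm' g]
    have hcong : ∀ p ∈ polarCoord.target, ENNReal.ofReal p.1 * g (polarCoord.symm p)
        = ENNReal.ofReal p.1 * ENNReal.ofReal ((1 + p.1)⁻¹)
          * ENNReal.ofReal (2 * (2 * t + 1) / Real.sqrt (T ^ 2 - p.1 ^ 2)) := by
      intro p hp
      have hp1 : 0 < p.1 := hp.1
      have hsq : (polarCoord.symm p).1 ^ 2 + (polarCoord.symm p).2 ^ 2 = p.1 ^ 2 := by
        simp only [polarCoord_symm_apply]
        nlinarith [sin_sq_add_cos_sq p.2]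
      rw [hg]
      simp only [hsq, Real.sqrt_sq hp1.le]
      ring
    rw [setLIntegral_congr_fun polarCoord.open_target.measurableSet
      hcong]
    have htarget : polarCoord.target = Set.Ioi (0:ℝ) ×ˢ Set.Ioo (-π) π := rfl
    rw [htarget]
    rw [Measure.volume_eq_prod, ← Measure.prod_restrict]
    have hhm : Measurable fun p : ℝ × ℝ => ENNReal.ofReal p.1 * ENNReal.ofReal ((1 + p.1)⁻¹)
        * ENNReal.ofReal (2 * (2 * t + 1) / Real.sqrt (T ^ 2 - p.1 ^ 2)) := by
      apply Measurable.fun_mul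
      apply Measurable.fun_mul
      · exact measurable_fst.ennreal_ofReal
      · exact ((measurable_const.add measurable_fst).inv).ennreal_ofReal
      · apply Measurable.ennreal_ofReal
        apply Measurable.div measurable_const
        apply Measurable.sqrt
        exact measurable_const.sub (measurable_fst.pow_const 2)
    rw [lintegral_prod_symm _ hhm.aemeasurable]
    simp only [lintegral_const, Measure.restrict_apply_univ, Real.volume_Ioo]
    have h2pi : π - -π = 2 * π := by ring
    rw [h2pi]
    exact mul_le_mul_left (oneD t ht) _
  calc ∫⁻ p : ℝ × ℝ × ℝ, Ψ p
      = ∫⁻ q : ℝ × ℝ, (∫⁻ u : ℝ, Ψ (u, q)) ∂volume := hsplit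
    _ ≤ ∫⁻ q : ℝ × ℝ, g q := lintegral_mono hinner
    _ ≤ ENNReal.ofReal (2 * (2 * t + 1)) * ENNReal.ofReal 2 * ENNReal.ofReal (2 * π) := houter
    _ = ENNReal.ofReal (8 * π * (2 * t + 1)) := by
        rw [← ENNReal.ofReal_mul (by positivity), ← ENNReal.ofReal_mul (by positivity)]
        congr 1
        ring

/-- `∫_{S(x,t)} (1 + |y|)⁻¹ dσ(y) ≤ C t` uniformly in `t > 0` and `x ∈ ℝ³`. -/
theorem sphere_integral_decay_estimate :
    ∃ C > (0 : ℝ), ∀ t : ℝ, 0 < t → ∀ x : E3,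
      sphereIntegral x t (fun y => (1 + ‖y‖)⁻¹) ≤ C * t := by
  set M : ℝ := (((volume : Measure E3).toSphere) Set.univ).toReal with hM
  have hM0 : 0 ≤ M := ENNReal.toReal_nonneg
  have hπ : (0:ℝ) < π := Real.pi_pos
  refine ⟨48 * π + M + 1, by nlinarith, ?_⟩
  intro t ht x
  set σ := ((volume : Measure E3).toSphere) with hσ
  set I : ℝ≥0∞ := ∫⁻ ω : Metric.sphere (0 : E3) 1,
      ENNReal.ofReal ((1 + ‖x + t • (ω : E3)‖)⁻¹) ∂σ with hI
  have hIle : I ≤ σ Set.univ := by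
    have : ∀ ω : Metric.sphere (0 : E3) 1,
        ENNReal.ofReal ((1 + ‖x + t • (ω : E3)‖)⁻¹) ≤ 1 := by
      intro ω
      rw [← ENNReal.ofReal_one]
      apply ENNReal.ofReal_le_ofReal
      rw [inv_le_one_iff₀]
      right
      linarith [norm_nonneg (x + t • (ω : E3))]
    calc I ≤ ∫⁻ _ : Metric.sphere (0 : E3) 1, 1 ∂σ := lintegral_mono this
      _ = σ Set.univ := by rw [lintegral_one]
  have hItop : I ≠ ⊤ := (lt_of_le_of_lt hIle (measure_lt_top σ _)).ne
  have hcont : Continuous fun ω : Metric.sphere (0 : E3) 1 => (1 + ‖x + t • (ω : E3)‖)⁻¹ := by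
    apply Continuous.inv₀
    · fun_prop
    · intro ω
      positivity
  have hBoch : ∫ ω : Metric.sphere (0 : E3) 1, (1 + ‖x + t • (ω : E3)‖)⁻¹ ∂σ = I.toReal := by
    rw [hI, integral_eq_lintegral_of_nonneg_ae
      (Filter.Eventually.of_forall fun ω => by positivity) hcont.aestronglyMeasurable]
  have hsi : sphereIntegral x t (fun y => (1 + ‖y‖)⁻¹) = t ^ 2 * I.toReal := by
    rw [sphereIntegral, ← hBoch, hσ]
  -- the key uniform bound
  have hkey : ENNReal.ofReal (t ^ 2) * I ≤ ENNReal.ofReal (16 * π * (2 * t + 1)) := by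
    calc ENNReal.ofReal (t ^ 2) * I
        ≤ 2 * ∫⁻ z, ({z : E3 | ‖z - x‖ ∈ Set.Icc t (t + 1)}).indicator
            (fun z => ENNReal.ofReal ((1 + ‖z‖)⁻¹)) z := step1 t ht x
      _ = 2 * ∫⁻ z, ({z : E3 | ‖z - ‖x‖ • (EuclideanSpace.single (0 : Fin 3) (1:ℝ))‖
              ∈ Set.Icc t (t + 1)}).indicator (fun z => ENNReal.ofReal ((1 + ‖z‖)⁻¹)) z := by
            rw [step2 t (t + 1) x]
      _ = 2 * ∫⁻ p : ℝ × ℝ × ℝ, ({p : ℝ × ℝ × ℝ |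
              Real.sqrt ((p.1 - ‖x‖) ^ 2 + p.2.1 ^ 2 + p.2.2 ^ 2) ∈ Set.Icc t (t + 1)}).indicator
            (fun p => ENNReal.ofReal ((1 + Real.sqrt (p.1 ^ 2 + p.2.1 ^ 2 + p.2.2 ^ 2))⁻¹)) p := by
            rw [step3 t (t + 1) ‖x‖]
      _ ≤ 2 * ENNReal.ofReal (8 * π * (2 * t + 1)) := by
            gcongr
            exact step4 ‖x‖ t ht
      _ = ENNReal.ofReal (16 * π * (2 * t + 1)) := by
            rw [← ENNReal.ofReal_ofNat, ← ENNReal.ofReal_mul (by norm_num)]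
            congr 1
            ring
  have hmain : t ^ 2 * I.toReal ≤ 16 * π * (2 * t + 1) := by
    have h1 : (ENNReal.ofReal (t ^ 2) * I).toReal ≤ (ENNReal.ofReal (16 * π * (2 * t + 1))).toReal :=
      ENNReal.toReal_mono ENNReal.ofReal_ne_top hkey
    rw [ENNReal.toReal_mul, ENNReal.toReal_ofReal (sq_nonneg t),
      ENNReal.toReal_ofReal (by positivity)] at h1
    exact h1
  rw [hsi]
  rcases le_or_gt t 1 with h1 | h1
  · -- small radius: trivial bound
    have hIM : I.toReal ≤ M := by
      rw [hM]
      exact ENNReal.toReal_mono (measure_ne_top σ _) hIle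
    have ht2 : t ^ 2 ≤ t := by nlinarith
    calc t ^ 2 * I.toReal ≤ t * M := by
          apply mul_le_mul ht2 hIM ENNReal.toReal_nonneg ht.le
      _ ≤ (48 * π + M + 1) * t := by nlinarith
  · -- large radius
    calc t ^ 2 * I.toReal ≤ 16 * π * (2 * t + 1) := hmain
      _ ≤ 48 * π * t := by nlinarith
      _ ≤ (48 * π + M + 1) * t := by nlinarith
end
end

section
/- There exists a constant C > 0 such that for all t ≥ 2 and all x ∈ ℝ³ with |x| ≤ t − 1, ∫₂^t (t − τ)^{−1} ( ∫_{S(0, t−τ)} 1_{{|x − y| ≥ τ − 1}} |x − y|^{−4} dσ(y) ) dτ ≤ C t^{−1}, where S(0,R) = {y ∈ ℝ³ : |y| = R} and σ is the rotation-invariant surface measure on S(0,R) with total mass 4πR², and 1_{{|x−y| ≥ τ−1}} denotes the indicator of the set {y : |x − y| ≥ τ − 1}. -/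
noncomputable section
open MeasureTheory

open Set Metric
open scoped ENNReal

namespace DuhamelAux

lemma lintegral_polar (f : E3 → ℝ≥0∞) (hf : Measurable f) :
    ∫⁻ y, f y ∂(volume : Measure E3)
      = ∫⁻ r in Ioi (0:ℝ), ENNReal.ofReal (r^2) *
          ∫⁻ ω : sphere (0:E3) 1, f (r • (ω : E3)) ∂((volume : Measure E3).toSphere) := by
  have hdim : Module.finrank ℝ E3 - 1 = 2 := by
    rw [finrank_euclideanSpace_fin]
  have hmeas : Measurable fun p : sphere (0:E3) 1 × Ioi (0:ℝ) => f (p.2.1 • p.1.1) := by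
    apply hf.comp
    fun_prop
  calc ∫⁻ y, f y ∂(volume : Measure E3)
      = ∫⁻ y in ({0}ᶜ : Set E3), f y ∂volume := by
        rw [MeasureTheory.restrict_compl_singleton]
    _ = ∫⁻ p : (({0}ᶜ : Set E3)), f p ∂((volume : Measure E3).comap (↑)) :=
        (lintegral_subtype_comap (measurableSet_singleton 0).compl f).symm
    _ = ∫⁻ p : sphere (0:E3) 1 × Ioi (0:ℝ), f (p.2.1 • p.1.1)
          ∂((volume : Measure E3).toSphere.prod (Measure.volumeIoiPow 2)) := by
        rw [← hdim]
        rw [← (Measure.measurePreserving_homeomorphUnitSphereProd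
          (volume : Measure E3)).lintegral_comp hmeas]
        refine lintegral_congr fun p => ?_
        congr 1
        simp only [homeomorphUnitSphereProd_apply_snd_coe,
          homeomorphUnitSphereProd_apply_fst_coe]
        exact (smul_inv_smul₀ (norm_ne_zero_iff.2 p.2) p.1).symm
    _ = ∫⁻ r : Ioi (0:ℝ), ∫⁻ ω : sphere (0:E3) 1, f (r.1 • ω.1)
          ∂((volume : Measure E3).toSphere) ∂(Measure.volumeIoiPow 2) :=
        lintegral_prod_symm _ hmeas.aemeasurable
    _ = ∫⁻ r : Ioi (0:ℝ), ENNReal.ofReal (r.1^2) * ∫⁻ ω : sphere (0:E3) 1, f (r.1 • ω.1)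
          ∂((volume : Measure E3).toSphere)
          ∂((volume : Measure ℝ).comap (↑)) := by
        rw [Measure.volumeIoiPow, lintegral_withDensity_eq_lintegral_mul]
        · rfl
        · fun_prop
        · exact hmeas.lintegral_prod_left'
    _ = _ := by
      rw [← lintegral_subtype_comap measurableSet_Ioi]

lemma toSphere_univ_E3 :
    (volume : Measure E3).toSphere univ = 3 * volume (ball (0:E3) 1) := by
  rw [Measure.toSphere_apply_univ]
  norm_num [finrank_euclideanSpace_fin]

lemma norm_smul_sphere (r : ℝ) (hr : 0 < r) (ω : sphere (0:E3) 1) :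
    ‖r • (ω : E3)‖ = r := by
  rw [norm_smul, Real.norm_eq_abs, abs_of_pos hr,
    mem_sphere_zero_iff_norm.mp ω.2, mul_one]

/-- the model function `1_{‖z‖ ≥ 1} ‖z‖⁻⁴`. -/
def Wfun : E3 → ℝ≥0∞ :=
  Set.indicator {z : E3 | 1 ≤ ‖z‖} (fun z => ENNReal.ofReal (‖z‖ ^ (-(4:ℝ))))

/-- the model function `1_{‖y‖ < s} ‖y‖⁻¹`. -/
def Vfun (s : ℝ) : E3 → ℝ≥0∞ :=
  Set.indicator (ball (0:E3) s) (fun y => ENNReal.ofReal (‖y‖⁻¹))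

lemma measurable_Wfun : Measurable Wfun := by
  apply Measurable.indicator
  · fun_prop
  · exact measurableSet_le measurable_const measurable_norm

lemma measurable_Vfun (s : ℝ) : Measurable (Vfun s) := by
  apply Measurable.indicator
  · fun_prop
  · exact measurableSet_ball

lemma lintegral_Wfun :
    ∫⁻ z, Wfun z = 3 * volume (ball (0:E3) 1) := by
  have hBne : 3 * volume (ball (0:E3) 1) ≠ ∞ := by
    exact ENNReal.mul_ne_top (by norm_num) measure_ball_lt_top.ne
  rw [lintegral_polar _ measurable_Wfun]
  have key : ∀ r ∈ Ioi (0:ℝ),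
      ENNReal.ofReal (r^2) * ∫⁻ ω : sphere (0:E3) 1,
        Wfun (r • (ω : E3)) ∂((volume : Measure E3).toSphere)
      = (3 * volume (ball (0:E3) 1)) *
          Set.indicator (Ici (1:ℝ)) (fun r => ENNReal.ofReal (r ^ (-(2:ℝ)))) r := by
    intro r hr
    have hr' : (0:ℝ) < r := hr
    have hne : ∀ ω : sphere (0:E3) 1,
        Wfun (r • (ω : E3))
        = Set.indicator (Ici (1:ℝ)) (fun s => ENNReal.ofReal (s ^ (-(4:ℝ)))) r := by
      intro ω
      simp only [Wfun, Set.indicator_apply, mem_setOf_eq, mem_Ici, norm_smul_sphere r hr']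
    simp only [hne]
    rw [lintegral_const, toSphere_univ_E3]
    by_cases h1 : (1:ℝ) ≤ r
    · simp only [Set.indicator_of_mem (mem_Ici.mpr h1)]
      have harith : ENNReal.ofReal (r^2) * ENNReal.ofReal (r ^ (-(4:ℝ)))
          = ENNReal.ofReal (r ^ (-(2:ℝ))) := by
        rw [← ENNReal.ofReal_mul (by positivity)]
        congr 1
        have h2 : r ^ (2:ℕ) = r ^ (2:ℝ) := by
          rw [← Real.rpow_natCast r 2]; norm_num
        rw [h2, ← Real.rpow_add hr']
        norm_num
      calc ENNReal.ofReal (r^2) * (ENNReal.ofReal (r ^ (-(4:ℝ))) * (3 * volume (ball (0:E3) 1)))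
          = 3 * volume (ball (0:E3) 1) * (ENNReal.ofReal (r^2) * ENNReal.ofReal (r ^ (-(4:ℝ)))) := by
            ring
        _ = _ := by rw [harith]
    · simp [Set.indicator_of_notMem (by simpa using h1 : r ∉ Ici (1:ℝ))]
  rw [setLIntegral_congr_fun measurableSet_Ioi
    key]
  rw [lintegral_const_mul' _ _ hBne]
  have : ∫⁻ r in Ioi (0:ℝ), Set.indicator (Ici (1:ℝ))
      (fun r => ENNReal.ofReal (r ^ (-(2:ℝ)))) r = 1 := by
    rw [lintegral_indicator measurableSet_Ici, Measure.restrict_restrict measurableSet_Ici,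
      show Ici (1:ℝ) ∩ Ioi 0 = Ici 1 from inter_eq_left.mpr
        (fun y hy => mem_Ioi.mpr (lt_of_lt_of_le one_pos hy)),
      Measure.restrict_congr_set Ioi_ae_eq_Ici.symm,
      ← ofReal_integral_eq_lintegral_ofReal]
    · rw [integral_Ioi_rpow_of_lt (by norm_num) one_pos]
      norm_num
    · exact integrableOn_Ioi_rpow_of_lt (by norm_num) one_pos
    · filter_upwards [ae_restrict_mem measurableSet_Ioi] with y hy
      exact Real.rpow_nonneg (le_of_lt (lt_trans one_pos hy)) _
  rw [this, mul_one]

lemma lintegral_Vfun (s : ℝ) (hs : 0 ≤ s) :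
    ∫⁻ y, Vfun s y = 3 * volume (ball (0:E3) 1) * ENNReal.ofReal (s^2/2) := by
  have hBne : 3 * volume (ball (0:E3) 1) ≠ ∞ :=
    ENNReal.mul_ne_top (by norm_num) measure_ball_lt_top.ne
  rw [lintegral_polar _ (measurable_Vfun s)]
  have key : ∀ r ∈ Ioi (0:ℝ),
      ENNReal.ofReal (r^2) * ∫⁻ ω : sphere (0:E3) 1,
        Vfun s (r • (ω : E3)) ∂((volume : Measure E3).toSphere)
      = (3 * volume (ball (0:E3) 1)) *
          Set.indicator (Iio s) (fun r => ENNReal.ofReal r) r := by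
    intro r hr
    have hr' : (0:ℝ) < r := hr
    have hne : ∀ ω : sphere (0:E3) 1,
        Vfun s (r • (ω : E3))
        = Set.indicator (Iio s) (fun u => ENNReal.ofReal (u⁻¹)) r := by
      intro ω
      have hnorm : ‖r • (ω:E3)‖ = r := norm_smul_sphere r hr' ω
      have hiff : (r • (ω:E3) ∈ ball (0:E3) s) ↔ r < s := by
        rw [mem_ball, dist_zero_right, hnorm]
      unfold Vfun
      by_cases hmem : r < s
      · rw [Set.indicator_of_mem (hiff.mpr hmem), Set.indicator_of_mem (mem_Iio.mpr hmem), hnorm]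
      · rw [Set.indicator_of_notMem (fun h => hmem (hiff.mp h)),
          Set.indicator_of_notMem (fun h => hmem (mem_Iio.mp h))]
    simp only [hne]
    rw [lintegral_const, toSphere_univ_E3]
    by_cases h1 : r < s
    · simp only [Set.indicator_of_mem (mem_Iio.mpr h1)]
      have harith : ENNReal.ofReal (r^2) * ENNReal.ofReal (r⁻¹)
          = ENNReal.ofReal r := by
        rw [← ENNReal.ofReal_mul (by positivity)]
        congr 1
        field_simp
      calc ENNReal.ofReal (r^2) * (ENNReal.ofReal r⁻¹ * (3 * volume (ball (0:E3) 1)))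
          = 3 * volume (ball (0:E3) 1) * (ENNReal.ofReal (r^2) * ENNReal.ofReal r⁻¹) := by
            ring
        _ = _ := by rw [harith]
    · simp [Set.indicator_of_notMem (by simpa using h1 : r ∉ Iio s)]
  rw [setLIntegral_congr_fun measurableSet_Ioi key,
    lintegral_const_mul' _ _ hBne]
  congr 1
  rw [lintegral_indicator measurableSet_Iio, Measure.restrict_restrict measurableSet_Iio]
  have : Iio s ∩ Ioi 0 = Ioo 0 s := by ext y; simp [mem_Ioo, and_comm]
  rw [this, Measure.restrict_congr_set Ioo_ae_eq_Ioc, ← ofReal_integral_eq_lintegral_ofReal]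
  · rw [← intervalIntegral.integral_of_le hs, integral_id]
    norm_num
  · exact (intervalIntegral.intervalIntegrable_id).1
  · filter_upwards [ae_restrict_mem measurableSet_Ioc] with y hy
    exact hy.1.le

/-- the function appearing after the polar/Duhamel change of variables. -/
def Ffun (t : ℝ) (x : E3) : E3 → ℝ≥0∞ := fun y =>
  Set.indicator (ball (0:E3) (t-2))
    (fun y => ENNReal.ofReal (‖y‖⁻¹) *
      ENNReal.ofReal (Set.indicator {z : E3 | t - ‖y‖ - 1 ≤ ‖x - z‖}
        (fun z => ‖x - z‖ ^ (-(4:ℝ))) y)) y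

lemma measurable_Ffun (t : ℝ) (x : E3) : Measurable (Ffun t x) := by
  apply Measurable.indicator _ measurableSet_ball
  refine Measurable.mul (f := fun y : E3 => ENNReal.ofReal (‖y‖⁻¹))
    (g := fun y : E3 => ENNReal.ofReal (Set.indicator {z : E3 | t - ‖y‖ - 1 ≤ ‖x - z‖}
      (fun z => ‖x - z‖ ^ (-(4:ℝ))) y)) ?_ ?_
  · fun_prop
  · have hrw : (fun y : E3 => Set.indicator {z : E3 | t - ‖y‖ - 1 ≤ ‖x - z‖}
        (fun z => ‖x - z‖ ^ (-(4:ℝ))) y)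
        = Set.indicator {y : E3 | t - ‖y‖ - 1 ≤ ‖x - y‖} (fun y => ‖x - y‖ ^ (-(4:ℝ))) := by
      ext y
      simp only [Set.indicator_apply, mem_setOf_eq]
    refine ENNReal.measurable_ofReal.comp ?_
    rw [hrw]
    apply Measurable.indicator
    · fun_prop
    · exact measurableSet_le (by fun_prop) (by fun_prop)

lemma Ffun_le_small {t : ℝ} (x : E3) (h4 : t ≤ 4) :
    ∀ y, Ffun t x y ≤ Vfun (t-2) y := by
  intro y
  unfold Ffun Vfun
  by_cases hball : y ∈ ball (0:E3) (t-2)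
  · rw [Set.indicator_of_mem hball, Set.indicator_of_mem hball]
    by_cases hind : t - ‖y‖ - 1 ≤ ‖x - y‖
    · rw [Set.indicator_of_mem (show y ∈ {z : E3 | t - ‖y‖ - 1 ≤ ‖x - z‖} from hind)]
      have hy2 : ‖y‖ < t - 2 := by simpa [mem_ball, dist_zero_right] using hball
      have hxy1 : 1 ≤ ‖x - y‖ := by linarith
      calc ENNReal.ofReal (‖y‖⁻¹) * ENNReal.ofReal (‖x - y‖ ^ (-(4:ℝ)))
          ≤ ENNReal.ofReal (‖y‖⁻¹) * 1 := by
            gcongr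
            exact ENNReal.ofReal_le_one.mpr
              (Real.rpow_le_one_of_one_le_of_nonpos hxy1 (by norm_num))
        _ = ENNReal.ofReal (‖y‖⁻¹) := mul_one _
    · rw [Set.indicator_of_notMem (show y ∉ {z : E3 | t - ‖y‖ - 1 ≤ ‖x - z‖} from hind)]
      simp
  · rw [Set.indicator_of_notMem hball, Set.indicator_of_notMem hball]

lemma Ffun_le_big {t : ℝ} (x : E3) (h4 : 4 ≤ t) :
    ∀ y, Ffun t x y ≤ ENNReal.ofReal (2*t⁻¹) * Wfun (x - y)
      + ENNReal.ofReal (256*(t⁻¹)^4) * Vfun (t-2) y := by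
  intro y
  unfold Ffun
  by_cases hball : y ∈ ball (0:E3) (t-2)
  · rw [Set.indicator_of_mem hball]
    by_cases hind : t - ‖y‖ - 1 ≤ ‖x - y‖
    · rw [Set.indicator_of_mem (show y ∈ {z : E3 | t - ‖y‖ - 1 ≤ ‖x - z‖} from hind)]
      have hy2 : ‖y‖ < t - 2 := by simpa [mem_ball, dist_zero_right] using hball
      have hxy1 : 1 ≤ ‖x - y‖ := by linarith
      have ht0 : (0:ℝ) < t := by linarith
      rcases lt_or_ge ‖x - y‖ (t/4) with hcase | hcase
      · have hy : t/2 ≤ ‖y‖ := by linarith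
        have hyinv : ‖y‖⁻¹ ≤ 2 * t⁻¹ := by
          calc ‖y‖⁻¹ ≤ (t/2)⁻¹ := inv_anti₀ (by positivity) hy
            _ = 2 * t⁻¹ := by rw [inv_div, div_eq_mul_inv]
        calc ENNReal.ofReal (‖y‖⁻¹) * ENNReal.ofReal (‖x - y‖ ^ (-(4:ℝ)))
            ≤ ENNReal.ofReal (2*t⁻¹) * ENNReal.ofReal (‖x - y‖ ^ (-(4:ℝ))) :=
              mul_le_mul_left (ENNReal.ofReal_le_ofReal hyinv) _
          _ = ENNReal.ofReal (2*t⁻¹) * Wfun (x - y) := by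
              unfold Wfun
              rw [Set.indicator_of_mem (show (x - y) ∈ {z : E3 | 1 ≤ ‖z‖} from hxy1)]
          _ ≤ _ := self_le_add_right _ _
      · have hρ : ‖x - y‖ ^ (-(4:ℝ)) ≤ 256 * (t⁻¹)^4 := by
          have h1 : (0:ℝ) < t/4 := by positivity
          have h2 : ‖x - y‖ ^ (-(4:ℝ)) ≤ (t/4) ^ (-(4:ℝ)) :=
            Real.rpow_le_rpow_of_nonpos h1 hcase (by norm_num)
          have h3 : (t/4 : ℝ) ^ (-(4:ℝ)) = 256 * (t⁻¹)^4 := by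
            rw [Real.rpow_neg h1.le, show ((4:ℝ)) = ((4:ℕ):ℝ) by norm_num,
              Real.rpow_natCast]
            field_simp
            ring
          linarith
        calc ENNReal.ofReal (‖y‖⁻¹) * ENNReal.ofReal (‖x - y‖ ^ (-(4:ℝ)))
            ≤ ENNReal.ofReal (‖y‖⁻¹) * ENNReal.ofReal (256*(t⁻¹)^4) :=
              mul_le_mul_right (ENNReal.ofReal_le_ofReal hρ) _
          _ = ENNReal.ofReal (256*(t⁻¹)^4) * Vfun (t-2) y := by
              unfold Vfun
              rw [Set.indicator_of_mem hball, mul_comm]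
          _ ≤ _ := self_le_add_left _ _
    · rw [Set.indicator_of_notMem (show y ∉ {z : E3 | t - ‖y‖ - 1 ≤ ‖x - z‖} from hind)]
      simp
  · rw [Set.indicator_of_notMem hball]
    exact zero_le

lemma lintegral_Ffun_le {t : ℝ} (x : E3) (h2 : 2 ≤ t) :
    ∫⁻ y, Ffun t x y
      ≤ ENNReal.ofReal (102 * (volume (ball (0:E3) 1)).toReal * t⁻¹) := by
  set B := volume (ball (0:E3) 1) with hBdef
  have hBne : B ≠ ∞ := measure_ball_lt_top.ne
  set β := B.toReal with hβdef
  have hβ0 : 0 ≤ β := ENNReal.toReal_nonneg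
  have hB : B = ENNReal.ofReal β := (ENNReal.ofReal_toReal hBne).symm
  have h3B : (3:ℝ≥0∞) * B = ENNReal.ofReal (3 * β) := by
    rw [hB, ENNReal.ofReal_mul (by norm_num)]
    norm_num
  have ht0 : (0:ℝ) < t := by linarith
  rcases le_or_gt t 4 with h4 | h4
  · calc ∫⁻ y, Ffun t x y ≤ ∫⁻ y, Vfun (t-2) y := lintegral_mono (Ffun_le_small x h4)
      _ = 3 * B * ENNReal.ofReal ((t-2)^2/2) := lintegral_Vfun (t-2) (by linarith)
      _ ≤ ENNReal.ofReal (102 * β * t⁻¹) := by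
          rw [h3B, ← ENNReal.ofReal_mul (by positivity)]
          apply ENNReal.ofReal_le_ofReal
          have h1 : (t-2)^2/2 ≤ 2 := by nlinarith
          have h2' : (4:ℝ)⁻¹ ≤ t⁻¹ := inv_anti₀ ht0 h4
          have h6 : 3*β*((t-2)^2/2) ≤ 6*β := by
            nlinarith [mul_le_mul_of_nonneg_left h1 hβ0]
          have h7 : 6*β ≤ 102*β*t⁻¹ := by
            nlinarith [mul_le_mul_of_nonneg_left h2' hβ0]
          linarith
  · have hW : ∫⁻ y, Wfun (x - y) = 3 * B := by
      rw [hBdef]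
      rw [← lintegral_Wfun]
      exact (Measure.measurePreserving_sub_left volume x).lintegral_comp measurable_Wfun
    calc ∫⁻ y, Ffun t x y
        ≤ ∫⁻ y, (ENNReal.ofReal (2*t⁻¹) * Wfun (x - y)
            + ENNReal.ofReal (256*(t⁻¹)^4) * Vfun (t-2) y) :=
          lintegral_mono (Ffun_le_big x h4.le)
      _ ≤ ENNReal.ofReal (102 * β * t⁻¹) := by
          have hWm : Measurable fun y : E3 => ENNReal.ofReal (2*t⁻¹) * Wfun (x - y) :=
            (measurable_Wfun.comp (measurable_const.sub measurable_id)).const_mul _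
          rw [lintegral_add_left hWm,
            lintegral_const_mul' _ _ ENNReal.ofReal_ne_top,
            lintegral_const_mul' _ _ ENNReal.ofReal_ne_top, hW,
            lintegral_Vfun (t-2) (by linarith), ← hBdef]
          rw [h3B, ← ENNReal.ofReal_mul (by positivity),
            ← ENNReal.ofReal_mul (by positivity), ← ENNReal.ofReal_mul (by positivity),
            ← ENNReal.ofReal_add (by positivity) (by positivity)]
          apply ENNReal.ofReal_le_ofReal
          have h1 : (t-2)^2 ≤ t^2 := by nlinarith
          have ha : t⁻¹ ≤ 1/4 := by
            rw [show (1:ℝ)/4 = (4:ℝ)⁻¹ by norm_num]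
            exact inv_anti₀ (by norm_num) h4.le
          have key2 : 256*(t⁻¹)^4 * (3*β*((t-2)^2/2)) ≤ 96 * β * t⁻¹ := by
            calc 256*(t⁻¹)^4 * (3*β*((t-2)^2/2)) = 384*β*(t-2)^2*(t⁻¹)^4 := by ring
              _ ≤ 384*β*t^2*(t⁻¹)^4 := by gcongr
              _ = 384*β*(t⁻¹)^2 * (t*t⁻¹)^2 := by ring
              _ = 384*β*(t⁻¹)^2 := by rw [mul_inv_cancel₀ ht0.ne']; ring
              _ = 384*β*t⁻¹*t⁻¹ := by ring
              _ ≤ 384*β*t⁻¹*(1/4) := by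
                  have hpos : (0:ℝ) ≤ 384*β*t⁻¹ := by positivity
                  exact mul_le_mul_of_nonneg_left ha hpos
              _ = 96*β*t⁻¹ := by ring
          have key1 : 2*t⁻¹*(3*β) = 6 * β * t⁻¹ := by ring
          linarith [key2]

end DuhamelAux

open DuhamelAux

/-- Duhamel-type estimate: for `t ≥ 2` and `|x| ≤ t − 1`,
`∫₂^t (t−τ)⁻¹ ∫_{S(0,t−τ)} 1_{{|x−y| ≥ τ−1}} |x−y|⁻⁴ dσ(y) dτ ≤ C t⁻¹`. -/
theorem exterior_source_duhamel_estimate :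
    ∃ C > (0 : ℝ), ∀ t : ℝ, 2 ≤ t → ∀ x : E3, ‖x‖ ≤ t - 1 →
      (∫ τ in (2 : ℝ)..t,
        (t - τ)⁻¹ *
          sphereIntegral 0 (t - τ)
            (fun y => Set.indicator {z : E3 | τ - 1 ≤ ‖x - z‖}
              (fun z => ‖x - z‖ ^ (-(4 : ℝ))) y)) ≤ C * t⁻¹ := by
  have hBpos : 0 < (volume (ball (0:E3) 1)).toReal :=
    ENNReal.toReal_pos (measure_ball_pos volume (0:E3) one_pos).ne' measure_ball_lt_top.ne
  refine ⟨102 * (volume (ball (0:E3) 1)).toReal, by positivity, ?_⟩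
  intro t ht x hx
  set β := (volume (ball (0:E3) 1)).toReal with hβdef
  have ht0 : (0:ℝ) < t := by linarith
  have hCt : (0:ℝ) ≤ 102 * β * t⁻¹ := by positivity
  set h : ℝ → ℝ := fun τ => (t - τ)⁻¹ *
      sphereIntegral 0 (t - τ)
        (fun y => Set.indicator {z : E3 | τ - 1 ≤ ‖x - z‖}
          (fun z => ‖x - z‖ ^ (-(4 : ℝ))) y) with hhdef
  by_cases hInt : IntervalIntegrable h volume 2 t
  swap
  · rw [intervalIntegral.integral_undef hInt]
    exact hCt
  have hnn : ∀ τ ∈ Ioc (2:ℝ) t, 0 ≤ h τ := by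
    intro τ hτ
    apply mul_nonneg
    · rw [inv_nonneg]
      linarith [hτ.2]
    · apply mul_nonneg (sq_nonneg _)
      apply integral_nonneg
      intro ω
      exact Set.indicator_nonneg (fun z _ => Real.rpow_nonneg (norm_nonneg _) _) _
  rw [intervalIntegral.integral_of_le ht,
    integral_eq_lintegral_of_nonneg_ae
      ((ae_restrict_mem measurableSet_Ioc).mono hnn)
      hInt.1.aestronglyMeasurable]
  apply ENNReal.toReal_le_of_le_ofReal hCt
  -- the substituted integrand
  set Φ : ℝ → ℝ≥0∞ := fun r => ENNReal.ofReal r⁻¹ * (ENNReal.ofReal (r^2) *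
      ∫⁻ ω : sphere (0:E3) 1, ENNReal.ofReal
        (Set.indicator {z : E3 | t - r - 1 ≤ ‖x - z‖}
          (fun z => ‖x - z‖ ^ (-(4:ℝ))) ((0:E3) + r • (ω : E3)))
        ∂((volume : Measure E3).toSphere)) with hΦdef
  have step1 : ∀ τ ∈ Ioc (2:ℝ) t, ENNReal.ofReal (h τ) ≤ Φ (t - τ) := by
    intro τ hτ
    have h1 : (0:ℝ) ≤ (t - τ)⁻¹ := by
      rw [inv_nonneg]; linarith [hτ.2]
    have hset : t - (t - τ) - 1 = τ - 1 := by ring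
    simp only [hhdef, hΦdef, sphereIntegral]
    rw [hset]
    rw [ENNReal.ofReal_mul h1, ENNReal.ofReal_mul (sq_nonneg _)]
    apply mul_le_mul_right
    apply mul_le_mul_right
    set G : Metric.sphere (0:E3) 1 → ℝ := fun ω =>
      Set.indicator {z : E3 | τ - 1 ≤ ‖x - z‖}
        (fun z => ‖x - z‖ ^ (-(4:ℝ))) ((0:E3) + (t - τ) • (ω : E3)) with hGdef
    by_cases hGint : Integrable G ((volume : Measure E3).toSphere)
    · rw [ofReal_integral_eq_lintegral_ofReal hGint (ae_of_all _ (fun ω =>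
        Set.indicator_nonneg (fun z _ => Real.rpow_nonneg (norm_nonneg _) _) _))]
    · rw [integral_undef hGint]
      simp
  have step2 : ∫⁻ τ in Ioc (2:ℝ) t, ENNReal.ofReal (h τ) ≤ ∫⁻ τ in Ioc (2:ℝ) t, Φ (t - τ) := by
    apply lintegral_mono_ae
    filter_upwards [ae_restrict_mem measurableSet_Ioc] with τ hτ
    exact step1 τ hτ
  have step3 : ∫⁻ τ in Ioc (2:ℝ) t, Φ (t - τ) = ∫⁻ r in Ico (0:ℝ) (t-2), Φ r := by
    have hmp : MeasurePreserving (fun τ : ℝ => t - τ) volume volume :=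
      Measure.measurePreserving_sub_left volume t
    rw [hmp.setLIntegral_comp_emb (MeasurableEquiv.subLeft t).measurableEmbedding Φ (Ioc 2 t)]
    congr 1
    rw [Set.image_const_sub_Ioc, sub_self]
  have step4 : ∫⁻ r in Ico (0:ℝ) (t-2), Φ r ≤ ∫⁻ y, Ffun t x y := by
    rw [← Measure.restrict_congr_set Ioo_ae_eq_Ico]
    have heq : ∀ r ∈ Ioo (0:ℝ) (t-2), Φ r = ENNReal.ofReal (r^2) *
        ∫⁻ ω : sphere (0:E3) 1, Ffun t x (r • (ω : E3))
          ∂((volume : Measure E3).toSphere) := by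
      intro r hr
      obtain ⟨hr0, hrt⟩ := hr
      have hFeq : ∀ ω : sphere (0:E3) 1, Ffun t x (r • (ω : E3))
          = ENNReal.ofReal r⁻¹ * ENNReal.ofReal
            (Set.indicator {z : E3 | t - r - 1 ≤ ‖x - z‖}
              (fun z => ‖x - z‖ ^ (-(4:ℝ))) ((0:E3) + r • (ω : E3))) := by
        intro ω
        have hnorm : ‖r • (ω:E3)‖ = r := norm_smul_sphere r hr0 ω
        have hmem : r • (ω:E3) ∈ ball (0:E3) (t-2) := by
          rw [mem_ball, dist_zero_right, hnorm]; exact hrt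
        unfold Ffun
        rw [Set.indicator_of_mem hmem, hnorm, zero_add]
      simp only [hΦdef, hFeq]
      rw [lintegral_const_mul' _ _ ENNReal.ofReal_ne_top]
      ring
    rw [setLIntegral_congr_fun measurableSet_Ioo heq]
    calc ∫⁻ r in Ioo (0:ℝ) (t-2), ENNReal.ofReal (r^2) *
          ∫⁻ ω : sphere (0:E3) 1, Ffun t x (r • (ω : E3))
            ∂((volume : Measure E3).toSphere)
        ≤ ∫⁻ r in Ioi (0:ℝ), ENNReal.ofReal (r^2) *
          ∫⁻ ω : sphere (0:E3) 1, Ffun t x (r • (ω : E3))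
            ∂((volume : Measure E3).toSphere) :=
          lintegral_mono_set Ioo_subset_Ioi_self
      _ = ∫⁻ y, Ffun t x y := (lintegral_polar _ (measurable_Ffun t x)).symm
  calc ∫⁻ τ in Ioc (2:ℝ) t, ENNReal.ofReal (h τ)
      ≤ ∫⁻ y, Ffun t x y := le_trans step2 (le_trans (le_of_eq step3) step4)
    _ ≤ ENNReal.ofReal (102 * β * t⁻¹) := lintegral_Ffun_le x ht
end
end
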